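/- arXiv:2506.10492 — 3 statements merged into one kernel-verified Lean document; each statement's English description precedes it below -/
import Mathlib

section
/- Let (G,σ,w) be a positive-connected signed graph on n vertices whose underlying graph G is not complete, and let ε₀ be its consensus index. For every ε < ε₀, the second smallest eigenvalue λ₂^(ε) of the ε-repelling Laplacian L_ε = L₊ − εL₋ satisfies λ₂^(ε) ≤ max_{x∈V} (d_x⁺ − ε·d_x⁻). -/
open Matrix BigOperators

open scoped Classical

/-- Moore–Penrose pseudoinverse of a square real matrix (chosen via the
defining Penrose equations; it is unique when it exists). -/
noncomputable def pinv {n : ℕ} (A : Matrix (Fin n) (Fin n) ℝ) : Matrix (Fin n) (Fin n) ℝ :=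
  if h : ∃ B : Matrix (Fin n) (Fin n) ℝ,
      A * B * A = A ∧ B * A * B = B ∧ (A * B)ᵀ = A * B ∧ (B * A)ᵀ = B * A
  then h.choose else 0

/-- The eigenvalues of a symmetric real matrix, sorted in nondecreasing order. -/
noncomputable def sortedEigs {n : ℕ} (A : Matrix (Fin n) (Fin n) ℝ) : List ℝ :=
  if h : A.IsHermitian then (Finset.univ.val.map h.eigenvalues).sort (· ≤ ·) else []

/-- The second smallest eigenvalue (with multiplicity) of a symmetric real matrix. -/
noncomputable def secondSmallestEig {n : ℕ} (A : Matrix (Fin n) (Fin n) ℝ) : ℝ :=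
  (sortedEigs A).getD 1 0

/-- The largest eigenvalue of a symmetric real matrix. -/
noncomputable def largestEig {n : ℕ} (A : Matrix (Fin n) (Fin n) ℝ) : ℝ :=
  (sortedEigs A).getD (n - 1) 0

/-- A signed weighted graph on `n` vertices, given by the positive-part and
negative-part weight functions (an edge carries a positive weight and a sign;
`wplus i j > 0` iff `(i,j)` is a positive edge, `wminus i j > 0` iff it is a
negative edge). -/
structure SignedGraph (n : ℕ) where
  wplus : Fin n → Fin n → ℝ
  wminus : Fin n → Fin n → ℝ
  wplus_symm : ∀ i j, wplus i j = wplus j i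
  wminus_symm : ∀ i j, wminus i j = wminus j i
  wplus_nonneg : ∀ i j, 0 ≤ wplus i j
  wminus_nonneg : ∀ i j, 0 ≤ wminus i j
  wplus_diag : ∀ i, wplus i i = 0
  wminus_diag : ∀ i, wminus i i = 0
  disjoint : ∀ i j, wplus i j = 0 ∨ wminus i j = 0

namespace SignedGraph

variable {n : ℕ} (Γ : SignedGraph n)

/-- positive degree -/
noncomputable def dplus (i : Fin n) : ℝ := ∑ j, Γ.wplus i j

/-- negative degree -/
noncomputable def dminus (i : Fin n) : ℝ := ∑ j, Γ.wminus i j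

/-- Laplacian of the positive subgraph -/
noncomputable def Lplus : Matrix (Fin n) (Fin n) ℝ :=
  Matrix.of fun i j => if i = j then Γ.dplus i else -Γ.wplus i j

/-- Laplacian of the negative subgraph -/
noncomputable def Lminus : Matrix (Fin n) (Fin n) ℝ :=
  Matrix.of fun i j => if i = j then Γ.dminus i else -Γ.wminus i j

/-- the ε-repelling Laplacian `L₊ - ε L₋` -/
noncomputable def Leps (ε : ℝ) : Matrix (Fin n) (Fin n) ℝ := Γ.Lplus - ε • Γ.Lminus

/-- the positive subgraph as a simple graph -/
def posGraph : SimpleGraph (Fin n) := SimpleGraph.fromRel (fun i j => 0 < Γ.wplus i j)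

/-- the negative subgraph as a simple graph -/
def negGraph : SimpleGraph (Fin n) := SimpleGraph.fromRel (fun i j => 0 < Γ.wminus i j)

/-- the underlying simple graph -/
def underlying : SimpleGraph (Fin n) :=
  SimpleGraph.fromRel (fun i j => 0 < Γ.wplus i j + Γ.wminus i j)

/-- the signed graph is positive-connected -/
def PosConnected : Prop := Γ.posGraph.Connected

/-- the signed graph is negative-connected -/
def NegConnected : Prop := Γ.negGraph.Connected

/-- the consensus index ε₀ -/
noncomputable def consensusIndex : ℝ :=
  sSup {ε : ℝ | 0 < ε ∧ (Γ.Leps ε).PosSemidef ∧ (Γ.Leps ε).rank = n - 1}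

/-- the ε-repelling cost Ω_ε(i,j) = (e_i - e_j)ᵀ L_ε† (e_i - e_j) -/
noncomputable def cost (ε : ℝ) (i j : Fin n) : ℝ :=
  (Pi.single i 1 - Pi.single j 1) ⬝ᵥ (pinv (Γ.Leps ε)) *ᵥ (Pi.single i 1 - Pi.single j 1)

/-- the ε-repelling matrix Ω_ε -/
noncomputable def costMatrix (ε : ℝ) : Matrix (Fin n) (Fin n) ℝ :=
  Matrix.of fun i j => Γ.cost ε i j

/-- the node ε-repelling curvature, the unique solution of Ω_ε τ_ε = n·1 -/
noncomputable def tau (ε : ℝ) : Fin n → ℝ :=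
  (Γ.costMatrix ε)⁻¹ *ᵥ (fun _ => (n : ℝ))

/-- φ_ε = n · 1ᵀ Ω_ε⁻¹ 1 -/
noncomputable def phi (ε : ℝ) : ℝ :=
  (n : ℝ) * ((fun _ => (1 : ℝ)) ⬝ᵥ ((Γ.costMatrix ε)⁻¹ *ᵥ fun _ => (1 : ℝ)))

/-- the quantity Λ_ε(i,j) appearing in the edge ε-repelling curvature -/
noncomputable def Lam (ε : ℝ) (i j : Fin n) : ℝ :=
  (Γ.dminus i + Γ.dminus j)
    - (∑ k, Γ.cost ε j k * Γ.wminus i k + ∑ k, Γ.cost ε i k * Γ.wminus j k) / Γ.cost ε i j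

/-- the edge ε-repelling curvature ϑ_ε(i,j) -/
noncomputable def edgeCurv (ε : ℝ) (i j : Fin n) : ℝ :=
  2 * (Γ.tau ε i + Γ.tau ε j) / Γ.cost ε i j + (1 + ε) * Γ.Lam ε i j

end SignedGraph


section Aux

variable {n : ℕ}

private lemma lap_mulVec (w : Fin n → Fin n → ℝ) (hdiag : ∀ i, w i i = 0) (v : Fin n → ℝ)
    (i : Fin n) :
    ((Matrix.of fun i j => if i = j then (∑ k, w i k) else -w i j) *ᵥ v) i
      = ∑ j, w i j * (v i - v j) := by
  have : ∀ j, (Matrix.of fun i j => if i = j then (∑ k, w i k) else -w i j) i j * v j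
      = (if j = i then (∑ k, w i k) * v i else 0) - w i j * v j := by
    intro j
    by_cases h : i = j
    · subst h; simp [hdiag i]
    · simp [Matrix.of_apply, if_neg h, if_neg (Ne.symm h)]
  simp only [Matrix.mulVec, dotProduct]
  rw [Finset.sum_congr rfl (fun j _ => this j), Finset.sum_sub_distrib,
    Finset.sum_ite_eq' Finset.univ i (fun _ => (∑ k, w i k) * v i)]
  simp [Finset.mul_sum, Finset.sum_sub_distrib, mul_sub, mul_comm]

private lemma lap_quad (w : Fin n → Fin n → ℝ) (hsymm : ∀ i j, w i j = w j i)
    (hdiag : ∀ i, w i i = 0) (v : Fin n → ℝ) :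
    v ⬝ᵥ ((Matrix.of fun i j => if i = j then (∑ k, w i k) else -w i j) *ᵥ v)
      = (1/2) * ∑ i, ∑ j, w i j * (v i - v j)^2 := by
  have hL : v ⬝ᵥ ((Matrix.of fun i j => if i = j then (∑ k, w i k) else -w i j) *ᵥ v)
      = ∑ i, ∑ j, w i j * (v i * (v i - v j)) := by
    simp only [dotProduct]
    refine Finset.sum_congr rfl fun i _ => ?_
    rw [lap_mulVec w hdiag v i, Finset.mul_sum]
    exact Finset.sum_congr rfl fun j _ => by ring
  have hskew : ∑ i, ∑ j, w i j * (v i ^ 2 - v j ^ 2) = 0 := by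
    have h1 : ∑ i, ∑ j, w i j * (v i ^ 2 - v j ^ 2)
        = ∑ j, ∑ i, w i j * (v i ^ 2 - v j ^ 2) := Finset.sum_comm
    have h2 : ∑ j : Fin n, ∑ i : Fin n, w i j * (v i ^ 2 - v j ^ 2)
        = ∑ j : Fin n, ∑ i : Fin n, -(w j i * (v j ^ 2 - v i ^ 2)) := by
      refine Finset.sum_congr rfl fun j _ => Finset.sum_congr rfl fun i _ => ?_
      rw [hsymm i j]; ring
    have h3 : ∑ j : Fin n, ∑ i : Fin n, -(w j i * (v j ^ 2 - v i ^ 2))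
        = -∑ j : Fin n, ∑ i : Fin n, w j i * (v j ^ 2 - v i ^ 2) := by
      simp [Finset.sum_neg_distrib]
    have := h1.trans (h2.trans h3)
    linarith
  have key : ∑ i, ∑ j, (2 * (w i j * (v i * (v i - v j))) - w i j * (v i - v j)^2)
      = ∑ i, ∑ j, w i j * (v i ^ 2 - v j ^ 2) := by
    refine Finset.sum_congr rfl fun i _ => Finset.sum_congr rfl fun j _ => ?_
    ring
  have expand : ∑ i : Fin n, ∑ j : Fin n,
      (2 * (w i j * (v i * (v i - v j))) - w i j * (v i - v j)^2)
      = 2 * (∑ i, ∑ j, w i j * (v i * (v i - v j))) - ∑ i, ∑ j, w i j * (v i - v j)^2 := by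
    rw [Finset.mul_sum, ← Finset.sum_sub_distrib]
    refine Finset.sum_congr rfl fun i _ => ?_
    rw [Finset.mul_sum, ← Finset.sum_sub_distrib]
  rw [hL]
  have := key; rw [expand] at this
  linarith

end Aux

namespace SignedGraph

variable {n : ℕ} (Γ : SignedGraph n)

private lemma leps_quad (ε : ℝ) (v : Fin n → ℝ) :
    v ⬝ᵥ (Γ.Leps ε *ᵥ v)
      = (1/2) * (∑ i, ∑ j, Γ.wplus i j * (v i - v j)^2)
        - ε * ((1/2) * (∑ i, ∑ j, Γ.wminus i j * (v i - v j)^2)) := by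
  rw [Leps, sub_mulVec, smul_mulVec, dotProduct_sub, dotProduct_smul]
  rw [show Γ.Lplus = Matrix.of fun i j => if i = j then (∑ k, Γ.wplus i k) else -Γ.wplus i j from rfl,
    show Γ.Lminus = Matrix.of fun i j => if i = j then (∑ k, Γ.wminus i k) else -Γ.wminus i j from rfl]
  rw [lap_quad _ Γ.wplus_symm Γ.wplus_diag, lap_quad _ Γ.wminus_symm Γ.wminus_diag]
  simp [smul_eq_mul]

private lemma quad_plus_nonneg (v : Fin n → ℝ) :
    0 ≤ ∑ i, ∑ j, Γ.wplus i j * (v i - v j)^2 :=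
  Finset.sum_nonneg fun i _ => Finset.sum_nonneg fun j _ =>
    mul_nonneg (Γ.wplus_nonneg i j) (sq_nonneg _)

private lemma quad_minus_nonneg (v : Fin n → ℝ) :
    0 ≤ ∑ i, ∑ j, Γ.wminus i j * (v i - v j)^2 :=
  Finset.sum_nonneg fun i _ => Finset.sum_nonneg fun j _ =>
    mul_nonneg (Γ.wminus_nonneg i j) (sq_nonneg _)

private lemma const_of_quad_plus_zero (hpc : Γ.PosConnected) (v : Fin n → ℝ)
    (h : ∑ i, ∑ j, Γ.wplus i j * (v i - v j)^2 = 0) : ∀ i j, v i = v j := by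
  have hterm : ∀ i j : Fin n, 0 < Γ.wplus i j → v i = v j := by
    intro i j hw
    have h1 : ∀ i ∈ Finset.univ, (0:ℝ) ≤ ∑ j, Γ.wplus i j * (v i - v j)^2 :=
      fun i _ => Finset.sum_nonneg fun j _ => mul_nonneg (Γ.wplus_nonneg i j) (sq_nonneg _)
    have h2 := (Finset.sum_eq_zero_iff_of_nonneg h1).1 h i (Finset.mem_univ i)
    have h3 : ∀ j ∈ Finset.univ, (0:ℝ) ≤ Γ.wplus i j * (v i - v j)^2 :=
      fun j _ => mul_nonneg (Γ.wplus_nonneg i j) (sq_nonneg _)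
    have h4 := (Finset.sum_eq_zero_iff_of_nonneg h3).1 h2 j (Finset.mem_univ j)
    have h5 : (v i - v j)^2 = 0 := by
      rcases mul_eq_zero.1 h4 with h | h
      · exact absurd h (ne_of_gt hw)
      · exact h
    have := pow_eq_zero_iff (n := 2) (by norm_num) |>.1 h5
    linarith
  intro i j
  have hreach : Γ.posGraph.Reachable i j := hpc.preconnected i j
  obtain ⟨p⟩ := hreach
  induction p with
  | nil => rfl
  | cons hadj p ih =>
    rename_i a b c
    have hab : v a = v b := by
      rcases hadj.2 with h | h
      · exact hterm a b h
      · exact hterm a b (by rwa [Γ.wplus_symm a b])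
    exact hab.trans ih

/-- For any `ε` below the consensus index, the quadratic form of `L_ε` is
nonnegative, and its null vectors are constant. -/
private lemma quad_nonneg_and_ker (hpc : Γ.PosConnected) (ε : ℝ)
    (hε : ε < Γ.consensusIndex) :
    (∀ v : Fin n → ℝ, 0 ≤ v ⬝ᵥ (Γ.Leps ε *ᵥ v)) ∧
      (∀ v : Fin n → ℝ, v ⬝ᵥ (Γ.Leps ε *ᵥ v) = 0 → ∀ i j, v i = v j) := by
  set S := {ε : ℝ | 0 < ε ∧ (Γ.Leps ε).PosSemidef ∧ (Γ.Leps ε).rank = n - 1} with hS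
  by_cases hex : ∃ ε' ∈ S, ε < ε'
  · obtain ⟨ε', hε'S, hlt⟩ := hex
    have hpsd : ∀ v : Fin n → ℝ, 0 ≤ v ⬝ᵥ (Γ.Leps ε' *ᵥ v) := by
      intro v
      have := hε'S.2.1.dotProduct_mulVec_nonneg v
      simpa using this
    have hsplit : ∀ v : Fin n → ℝ, v ⬝ᵥ (Γ.Leps ε *ᵥ v)
        = v ⬝ᵥ (Γ.Leps ε' *ᵥ v)
          + (ε' - ε) * ((1/2) * (∑ i, ∑ j, Γ.wminus i j * (v i - v j)^2)) := by
      intro v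
      rw [Γ.leps_quad ε v, Γ.leps_quad ε' v]; ring
    constructor
    · intro v
      rw [hsplit v]
      have h2 : 0 ≤ (ε' - ε) * ((1/2) * (∑ i, ∑ j, Γ.wminus i j * (v i - v j)^2)) :=
        mul_nonneg (by linarith) (by have := Γ.quad_minus_nonneg v; linarith)
      have := hpsd v
      linarith
    · intro v hv
      rw [hsplit v] at hv
      have h1 := hpsd v
      have h2 : 0 ≤ (ε' - ε) * ((1/2) * (∑ i, ∑ j, Γ.wminus i j * (v i - v j)^2)) :=
        mul_nonneg (by linarith) (by have := Γ.quad_minus_nonneg v; linarith)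
      have hqm : ∑ i, ∑ j, Γ.wminus i j * (v i - v j)^2 = 0 := by
        have hzero : (ε' - ε) * ((1/2) * (∑ i, ∑ j, Γ.wminus i j * (v i - v j)^2)) = 0 := by
          linarith
        have hne : ε' - ε ≠ 0 := by linarith
        rcases mul_eq_zero.1 hzero with h | h
        · exact absurd h hne
        · linarith
      have hqeps' : v ⬝ᵥ (Γ.Leps ε' *ᵥ v) = 0 := by
        rw [hqm] at hv; linarith
      have hqp : ∑ i, ∑ j, Γ.wplus i j * (v i - v j)^2 = 0 := by
        have := Γ.leps_quad ε' v
        rw [hqeps', hqm] at this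
        linarith
      exact Γ.const_of_quad_plus_zero hpc v hqp
  · have hεneg : ε < 0 := by
      push_neg at hex
      rcases Set.eq_empty_or_nonempty S with hSe | hSne
      · have : Γ.consensusIndex = 0 := by
          rw [consensusIndex, ← hS, hSe, Real.sSup_empty]
        linarith [hε, this]
      · have hub : ∀ x ∈ S, x ≤ ε := hex
        have : Γ.consensusIndex ≤ ε := csSup_le hSne hub
        linarith [hε]
    constructor
    · intro v
      rw [Γ.leps_quad ε v]
      have h1 := Γ.quad_plus_nonneg v
      have h2 := Γ.quad_minus_nonneg v
      nlinarith
    · intro v hv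
      rw [Γ.leps_quad ε v] at hv
      have h1 := Γ.quad_plus_nonneg v
      have h2 := Γ.quad_minus_nonneg v
      have hqp : ∑ i, ∑ j, Γ.wplus i j * (v i - v j)^2 = 0 := by nlinarith
      exact Γ.const_of_quad_plus_zero hpc v hqp

private lemma leps_isHermitian (ε : ℝ) : (Γ.Leps ε).IsHermitian := by
  rw [Matrix.IsHermitian, Matrix.conjTranspose_eq_transpose_of_trivial]
  ext i j
  simp only [Matrix.transpose_apply, Leps, Matrix.sub_apply, Matrix.smul_apply, Lplus, Lminus,
    Matrix.of_apply, smul_eq_mul]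
  by_cases h : i = j
  · subst h; rfl
  · have h1 : (i = j) = False := eq_false h
    have h2 : (j = i) = False := eq_false (Ne.symm h)
    simp only [h1, h2, if_false]
    rw [Γ.wplus_symm j i, Γ.wminus_symm j i]

private lemma leps_mulVec_one (ε : ℝ) : Γ.Leps ε *ᵥ (fun _ => (1:ℝ)) = 0 := by
  funext i
  rw [Leps, sub_mulVec, smul_mulVec]
  have hp : (Γ.Lplus *ᵥ fun _ => (1:ℝ)) i = 0 := by
    rw [show Γ.Lplus = Matrix.of fun i j => if i = j then (∑ k, Γ.wplus i k) else -Γ.wplus i j from rfl,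
      lap_mulVec _ Γ.wplus_diag]
    simp
  have hm : (Γ.Lminus *ᵥ fun _ => (1:ℝ)) i = 0 := by
    rw [show Γ.Lminus = Matrix.of fun i j => if i = j then (∑ k, Γ.wminus i k) else -Γ.wminus i j from rfl,
      lap_mulVec _ Γ.wminus_diag]
    simp
  simp [Pi.sub_apply, hp, hm]

end SignedGraph

/-- key spectral lemma: if `A` is symmetric with nonnegative quadratic form,
`A 1 = 0`, and null vectors of the quadratic form are constant, then the second
smallest eigenvalue is at most the Rayleigh quotient of any vector orthogonal
to `1`. -/
private lemma secondSmallestEig_le_rayleigh {n : ℕ} (A : Matrix (Fin n) (Fin n) ℝ)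
    (hA : A.IsHermitian) (hn : 2 ≤ n)
    (hquad : ∀ v : Fin n → ℝ, 0 ≤ v ⬝ᵥ (A *ᵥ v))
    (hker : ∀ v : Fin n → ℝ, v ⬝ᵥ (A *ᵥ v) = 0 → ∀ i j, v i = v j)
    (hone : A *ᵥ (fun _ => (1:ℝ)) = 0)
    (v : Fin n → ℝ) (hvsum : ∑ i, v i = 0) :
    secondSmallestEig A * (v ⬝ᵥ v) ≤ v ⬝ᵥ (A *ᵥ v) := by
  classical
  set ev := hA.eigenvalues with hev
  set U := (hA.eigenvectorUnitary : Matrix (Fin n) (Fin n) ℝ) with hUdef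
  have hU1 : star U * U = 1 := (Unitary.mem_iff.mp hA.eigenvectorUnitary.2).1
  have hU2 : U * star U = 1 := (Unitary.mem_iff.mp hA.eigenvectorUnitary.2).2
  have hstar : star U = Uᵀ := by
    rw [star_eq_conjTranspose, Matrix.conjTranspose_eq_transpose_of_trivial]
  have hspec : A = U * Matrix.diagonal ev * star U := by
    have := hA.spectral_theorem
    convert this using 2
    all_goals funext i
    all_goals simp [hev]
    all_goals rfl
  -- eigenvalues are nonnegative
  have hev_nonneg : ∀ i, 0 ≤ ev i := by
    intro i
    have h2 := hquad (⇑(hA.eigenvectorBasis i))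
    show 0 ≤ hA.eigenvalues i
    rw [hA.eigenvalues_eq i]
    simpa using h2
  -- some eigenvalue is zero
  have hdet : A.det = 0 := by
    rw [← Matrix.exists_mulVec_eq_zero_iff]
    refine ⟨fun _ => (1:ℝ), ?_, hone⟩
    intro h0
    have := congrFun h0 ⟨0, by omega⟩
    norm_num at this
  have hzero : ∃ i0, ev i0 = 0 := by
    have : ∏ i, ev i = 0 := by
      have := hA.det_eq_prod_eigenvalues
      simp only [RCLike.ofReal_real_eq_id, id] at this
      rw [hdet] at this
      exact this.symm
    obtain ⟨i0, _, h⟩ := Finset.prod_eq_zero_iff.1 this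
    exact ⟨i0, h⟩
  obtain ⟨i0, hi0⟩ := hzero
  -- the sorted list of eigenvalues
  set l := sortedEigs A with hl
  have hlval : l = (Finset.univ.val.map ev).sort (· ≤ ·) := by
    rw [hl, sortedEigs, dif_pos hA]
  have hlen : l.length = n := by
    rw [hlval, Multiset.length_sort, Multiset.card_map]
    simp
  have hsorted : l.Pairwise (· ≤ ·) := by rw [hlval]; exact Multiset.pairwise_sort _ _
  -- destructure
  obtain ⟨a, b, t, hlabt⟩ : ∃ a b t, l = a :: b :: t := by
    match hl2 : l with
    | [] => exfalso; simp at hlen; omega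
    | [a] => exfalso; simp at hlen; omega
    | a :: b :: t => exact ⟨a, b, t, rfl⟩
  have hμ : secondSmallestEig A = b := by
    rw [secondSmallestEig, ← hl, hlabt]; rfl
  -- every eigenvalue except possibly (one copy of) zero is ≥ b
  have hcount_le : l.countP (fun r => decide (r < b)) ≤ 1 := by
    rw [hlabt]
    have hs2 : (b :: t).Pairwise (· ≤ ·) := by
      rw [hlabt] at hsorted; exact hsorted.tail
    have htail : ∀ x ∈ t, b ≤ x := by
      intro x hx; exact (List.pairwise_cons.1 hs2).1 x hx
    have h0 : t.countP (fun r => decide (r < b)) = 0 := by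
      rw [List.countP_eq_zero]
      intro x hx
      simpa using not_lt.2 (htail x hx)
    simp [List.countP_cons, h0]
    split <;> omega
  have hmuge : ∀ j : Fin n, j ≠ i0 → b ≤ ev j := by
    intro j hj
    by_contra hjb
    push_neg at hjb
    have hi0b : ev i0 < b := by
      have := hev_nonneg j
      rw [hi0]; linarith
    -- two indices give two elements < b
    have hcard : 2 ≤ (Finset.univ.filter (fun i => ev i < b)).card := by
      have hsub : ({j, i0} : Finset (Fin n)) ⊆ Finset.univ.filter (fun i => ev i < b) := by
        intro x hx
        rcases Finset.mem_insert.1 hx with h | h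
        · subst h; exact Finset.mem_filter.2 ⟨Finset.mem_univ _, hjb⟩
        · rw [Finset.mem_singleton.1 h]; exact Finset.mem_filter.2 ⟨Finset.mem_univ _, hi0b⟩
      calc 2 = ({j, i0} : Finset (Fin n)).card := (Finset.card_pair hj).symm
        _ ≤ _ := Finset.card_le_card hsub
    have hcnt : l.countP (fun r => decide (r < b))
        = (Finset.univ.filter (fun i => ev i < b)).card := by
      have h1 : (l : Multiset ℝ) = Finset.univ.val.map ev := by
        rw [hlval]; exact Multiset.sort_eq _ _
      have h2 : Multiset.countP (fun r => r < b) (l : Multiset ℝ)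
          = l.countP (fun r => decide (r < b)) := Multiset.coe_countP _ _
      rw [← h2, h1, Multiset.countP_map]
      rfl
    rw [hcnt] at hcount_le
    omega
  -- set up the coordinates y
  set y := star U *ᵥ v with hy
  have hAv : v ⬝ᵥ (A *ᵥ v) = ∑ i, ev i * (y i * y i) := by
    rw [hspec]
    rw [← Matrix.mulVec_mulVec, ← Matrix.mulVec_mulVec]
    rw [show ∀ b : Fin n → ℝ, v ⬝ᵥ (U *ᵥ b) = (Uᵀ *ᵥ v) ⬝ᵥ b from
      fun b => by rw [Matrix.dotProduct_mulVec, Matrix.mulVec_transpose]]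
    rw [← hstar, ← hy]
    simp only [dotProduct, Matrix.mulVec_diagonal]
    exact Finset.sum_congr rfl fun i _ => by ring
  have hvv : v ⬝ᵥ v = ∑ i, y i * y i := by
    have hvU : v = U *ᵥ y := by
      rw [hy, Matrix.mulVec_mulVec, hU2, Matrix.one_mulVec]
    conv_lhs => rw [hvU]
    rw [show ∀ a b : Fin n → ℝ, a ⬝ᵥ (U *ᵥ b) = (Uᵀ *ᵥ a) ⬝ᵥ b from
      fun a b => by rw [Matrix.dotProduct_mulVec, Matrix.mulVec_transpose]]
    rw [← hstar, Matrix.mulVec_mulVec, hU1, Matrix.one_mulVec]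
    rfl
  -- y i0 = 0
  have hyi0 : y i0 = 0 := by
    set u : Fin n → ℝ := fun j => U j i0 with hu
    have huB : u = ⇑(hA.eigenvectorBasis i0) := by
      funext j; rw [hu]; exact hA.eigenvectorUnitary_apply j i0
    have hAu : A *ᵥ u = 0 := by
      rw [huB, hA.mulVec_eigenvectorBasis, ← hev, hi0, zero_smul]
    have huconst : ∀ i j, u i = u j := by
      apply hker
      rw [hAu]; simp
    have hn0 : 0 < n := by omega
    have hyval : y i0 = ∑ j, u j * v j := by
      rw [hy]
      simp only [Matrix.mulVec, dotProduct]
      refine Finset.sum_congr rfl fun j _ => ?_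
      rw [hstar, Matrix.transpose_apply, hu]
    rw [hyval]
    have j0 : Fin n := ⟨0, hn0⟩
    calc ∑ j, u j * v j = ∑ j, u j0 * v j :=
          Finset.sum_congr rfl fun j _ => by rw [huconst j j0]
      _ = u j0 * ∑ j, v j := by rw [Finset.mul_sum]
      _ = 0 := by rw [hvsum, mul_zero]
  -- the Rayleigh bound
  rw [hμ, hAv, hvv, Finset.mul_sum]
  apply Finset.sum_le_sum
  intro i _
  by_cases hii : i = i0
  · subst hii; rw [hyi0]; simp
  · exact mul_le_mul_of_nonneg_right (hmuge i hii) (mul_self_nonneg _)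

/-- upper bound for λ₂ of the ε-repelling Laplacian on a
non-complete positive-connected signed graph. -/
theorem stmt0 {n : ℕ} (Γ : SignedGraph n) (hpc : Γ.PosConnected)
    (hnoncomplete : ∃ x y : Fin n, x ≠ y ∧ ¬ Γ.underlying.Adj x y)
    (ε : ℝ) (hε : ε < Γ.consensusIndex) :
    secondSmallestEig (Γ.Leps ε) ≤ ⨆ x : Fin n, (Γ.dplus x - ε * Γ.dminus x) := by
  classical
  obtain ⟨x, y, hxy, hnadj⟩ := hnoncomplete
  have hn : 2 ≤ n := by
    have : (x : ℕ) ≠ (y : ℕ) := fun h => hxy (Fin.ext h)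
    omega
  have hA := Γ.leps_isHermitian ε
  obtain ⟨hquad, hker⟩ := Γ.quad_nonneg_and_ker hpc ε hε
  -- the non-edge gives zero weights
  have hw0 : Γ.wplus x y = 0 ∧ Γ.wminus x y = 0 := by
    have : ¬ (0 < Γ.wplus x y + Γ.wminus x y) := by
      intro h
      exact hnadj ⟨hxy, Or.inl h⟩
    push_neg at this
    have h1 := Γ.wplus_nonneg x y
    have h2 := Γ.wminus_nonneg x y
    constructor <;> linarith
  -- the test vector
  set v : Fin n → ℝ := Pi.single x 1 - Pi.single y 1 with hv
  have hvsum : ∑ i, v i = 0 := by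
    rw [hv]
    simp [Pi.sub_apply, Finset.sum_sub_distrib, Finset.sum_pi_single]
  have hvv : v ⬝ᵥ v = 2 := by
    rw [hv]
    rw [sub_dotProduct, dotProduct_sub, dotProduct_sub]
    simp [Pi.single_apply, hxy, Ne.symm hxy]
    norm_num
  have hentry_xy : Γ.Leps ε x y = 0 := by
    simp only [SignedGraph.Leps, Matrix.sub_apply, Matrix.smul_apply, SignedGraph.Lplus,
      SignedGraph.Lminus, Matrix.of_apply, if_neg hxy, smul_eq_mul, hw0.1, hw0.2]
    ring
  have hentry_yx : Γ.Leps ε y x = 0 := by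
    simp only [SignedGraph.Leps, Matrix.sub_apply, Matrix.smul_apply, SignedGraph.Lplus,
      SignedGraph.Lminus, Matrix.of_apply, if_neg (Ne.symm hxy), smul_eq_mul]
    rw [Γ.wplus_symm y x, Γ.wminus_symm y x, hw0.1, hw0.2]
    ring
  have hentry_xx : Γ.Leps ε x x = Γ.dplus x - ε * Γ.dminus x := by
    simp [SignedGraph.Leps, SignedGraph.Lplus, SignedGraph.Lminus]
  have hentry_yy : Γ.Leps ε y y = Γ.dplus y - ε * Γ.dminus y := by
    simp [SignedGraph.Leps, SignedGraph.Lplus, SignedGraph.Lminus]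
  have hAvv : v ⬝ᵥ (Γ.Leps ε *ᵥ v)
      = (Γ.dplus x - ε * Γ.dminus x) + (Γ.dplus y - ε * Γ.dminus y) := by
    rw [hv, mulVec_sub, Matrix.mulVec_single, Matrix.mulVec_single]
    rw [sub_dotProduct, dotProduct_sub, dotProduct_sub]
    simp only [single_dotProduct, Pi.sub_apply, Pi.smul_apply, Matrix.col_apply, op_smul_eq_mul, one_mul, mul_one]
    rw [hentry_xy, hentry_yx, hentry_xx, hentry_yy]
    ring
  have hray := secondSmallestEig_le_rayleigh (Γ.Leps ε) hA hn hquad hker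
    (Γ.leps_mulVec_one ε) v hvsum
  rw [hvv, hAvv] at hray
  -- conclude with the supremum
  have hbdd : BddAbove (Set.range fun x : Fin n => Γ.dplus x - ε * Γ.dminus x) :=
    Set.Finite.bddAbove (Set.finite_range _)
  have hx := le_ciSup hbdd x
  have hy' := le_ciSup hbdd y
  linarith
end

section
/- Let (G,σ,w) be a positive-connected signed graph with consensus index ε₀, and let 0 < ε < ε₀. If the node ε-repelling curvature satisfies τ_ε(i) ≥ K_ε for all i ∈ V for some constant K_ε > 0, then the second smallest eigenvalue λ₂^(ε) of L_ε satisfies λ₂^(ε) ≥ 2·K_ε/|V(G)|. -/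
open Matrix BigOperators

open scoped Classical

namespace Stmt3Aux

abbrev Penrose {n : ℕ} (A B : Matrix (Fin n) (Fin n) ℝ) : Prop :=
  A * B * A = A ∧ B * A * B = B ∧ (A * B)ᵀ = A * B ∧ (B * A)ᵀ = B * A

lemma penrose_unique {n : ℕ} {A B C : Matrix (Fin n) (Fin n) ℝ}
    (hB : Penrose A B) (hC : Penrose A C) : B = C := by
  obtain ⟨hB1, hB2, hB3, hB4⟩ := hB
  obtain ⟨hC1, hC2, hC3, hC4⟩ := hC
  have hAt : Aᵀ = Aᵀ * Cᵀ * Aᵀ := by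
    conv_lhs => rw [← hC1]
    rw [transpose_mul, transpose_mul]
    rw [mul_assoc]
  have hCAt : Cᵀ * Aᵀ = A * C := by rw [← transpose_mul, hC3]
  have hACt : Aᵀ * Cᵀ = C * A := by rw [← transpose_mul, hC4]
  have hAB : A * B = A * C := by
    calc A * B = Bᵀ * Aᵀ := by rw [← transpose_mul, hB3]
    _ = Bᵀ * (Aᵀ * Cᵀ * Aᵀ) := by rw [← hAt]
    _ = (Bᵀ * Aᵀ) * (Cᵀ * Aᵀ) := by noncomm_ring
    _ = (A * B) * (A * C) := by rw [← transpose_mul, hB3, hCAt]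
    _ = (A * B * A) * C := by noncomm_ring
    _ = A * C := by rw [hB1]
  have hBA : B * A = C * A := by
    calc B * A = Aᵀ * Bᵀ := by rw [← transpose_mul, hB4]
    _ = (Aᵀ * Cᵀ * Aᵀ) * Bᵀ := by rw [← hAt]
    _ = (Aᵀ * Cᵀ) * (Aᵀ * Bᵀ) := by noncomm_ring
    _ = (C * A) * (B * A) := by rw [hACt, ← transpose_mul, hB4]
    _ = C * (A * B * A) := by noncomm_ring
    _ = C * A := by rw [hB1]
  calc B = B * A * B := hB2.symm
  _ = C * A * B := by rw [hBA]
  _ = C * (A * B) := by rw [mul_assoc]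
  _ = C * (A * C) := by rw [hAB]
  _ = C * A * C := by rw [mul_assoc]
  _ = C := hC2

lemma pinv_eq {n : ℕ} {A B : Matrix (Fin n) (Fin n) ℝ} (h : Penrose A B) : pinv A = B := by
  have hex : ∃ B : Matrix (Fin n) (Fin n) ℝ, Penrose A B := ⟨B, h⟩
  rw [pinv, dif_pos hex]
  exact penrose_unique hex.choose_spec h

variable {n : ℕ}

lemma star_eq_transpose (V : Matrix (Fin n) (Fin n) ℝ) : star V = Vᵀ := by
  ext i j
  simp [Matrix.star_apply]

lemma VDV_mul {V : Matrix (Fin n) (Fin n) ℝ} (hV : Vᵀ * V = 1) (a b : Fin n → ℝ) :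
    (V * diagonal a * Vᵀ) * (V * diagonal b * Vᵀ)
      = V * diagonal (fun k => a k * b k) * Vᵀ := by
  have h : (V * diagonal a * Vᵀ) * (V * diagonal b * Vᵀ)
      = V * (diagonal a * ((Vᵀ * V) * (diagonal b * Vᵀ))) := by noncomm_ring
  rw [h, hV, one_mul, ← mul_assoc (diagonal a), diagonal_mul_diagonal, ← mul_assoc]

lemma VDV_transpose (V : Matrix (Fin n) (Fin n) ℝ) (a : Fin n → ℝ) :
    (V * diagonal a * Vᵀ)ᵀ = V * diagonal a * Vᵀ := by
  rw [transpose_mul, transpose_mul, transpose_transpose, diagonal_transpose, mul_assoc]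

lemma spectral_real {A : Matrix (Fin n) (Fin n) ℝ} (hA : A.IsHermitian) :
    A = (hA.eigenvectorUnitary : Matrix (Fin n) (Fin n) ℝ) * diagonal hA.eigenvalues *
        (hA.eigenvectorUnitary : Matrix (Fin n) (Fin n) ℝ)ᵀ := by
  have h := hA.spectral_theorem
  rwa [Unitary.conjStarAlgAut_apply, RCLike.ofReal_real_eq_id, Function.id_comp, star_eq_transpose] at h

lemma unitary_tV {A : Matrix (Fin n) (Fin n) ℝ} (hA : A.IsHermitian) :
    (hA.eigenvectorUnitary : Matrix (Fin n) (Fin n) ℝ)ᵀ *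
      (hA.eigenvectorUnitary : Matrix (Fin n) (Fin n) ℝ) = 1 := by
  rw [← star_eq_transpose]
  exact mem_unitaryGroup_iff'.mp hA.eigenvectorUnitary.2

lemma pinv_spectral {A : Matrix (Fin n) (Fin n) ℝ} (hA : A.IsHermitian) :
    pinv A = (hA.eigenvectorUnitary : Matrix (Fin n) (Fin n) ℝ) *
      diagonal (fun k => (hA.eigenvalues k)⁻¹) *
      (hA.eigenvectorUnitary : Matrix (Fin n) (Fin n) ℝ)ᵀ := by
  set V := (hA.eigenvectorUnitary : Matrix (Fin n) (Fin n) ℝ) with hVdef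
  have hV : Vᵀ * V = 1 := unitary_tV hA
  set μ := hA.eigenvalues with hμdef
  have hAeq : A = V * diagonal μ * Vᵀ := spectral_real hA
  apply pinv_eq
  have h1 : ∀ k, μ k * (μ k)⁻¹ * μ k = μ k := by
    intro k; by_cases h : μ k = 0 <;> field_simp [h]
  have h2 : ∀ k, (μ k)⁻¹ * μ k * (μ k)⁻¹ = (μ k)⁻¹ := by
    intro k; by_cases h : μ k = 0 <;> field_simp [h]
  refine ⟨?_, ?_, ?_, ?_⟩
  · rw [hAeq, VDV_mul hV, VDV_mul hV]
    rw [show (fun k => μ k * (μ k)⁻¹ * μ k) = μ from funext h1]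
  · rw [hAeq, VDV_mul hV, VDV_mul hV]
    rw [show (fun k => (μ k)⁻¹ * μ k * (μ k)⁻¹) = (fun k => (μ k)⁻¹) from funext h2]
  · rw [hAeq, VDV_mul hV, VDV_transpose]
  · rw [hAeq, VDV_mul hV, VDV_transpose]

lemma conj_quad (V : Matrix (Fin n) (Fin n) ℝ) (ν : Fin n → ℝ) (x : Fin n → ℝ) :
    x ⬝ᵥ (V * diagonal ν * Vᵀ) *ᵥ x = ∑ k, ν k * ((Vᵀ *ᵥ x) k)^2 := by
  have h : (V * diagonal ν * Vᵀ) *ᵥ x = V *ᵥ (diagonal ν *ᵥ (Vᵀ *ᵥ x)) := by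
    rw [mulVec_mulVec, mulVec_mulVec]
  rw [h, dotProduct_mulVec, ← mulVec_transpose]
  simp only [dotProduct, mulVec_diagonal]
  exact Finset.sum_congr rfl fun k _ => by ring

lemma lap_inner (w : Fin n → Fin n → ℝ) (hdiag : ∀ i, w i i = 0) (x : Fin n → ℝ) (i : Fin n) :
    ∑ j, (if i = j then (∑ k, w i k) else -w i j) * x j
      = (∑ k, w i k) * x i - ∑ j, w i j * x j := by
  have h : ∀ j : Fin n, (if i = j then (∑ k, w i k) else -w i j) * x j
      = (if i = j then ((∑ k, w i k) + w i j) * x j else 0) - w i j * x j := by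
    intro j
    by_cases h : i = j
    · subst h; rw [if_pos rfl, if_pos rfl, hdiag i]; ring
    · rw [if_neg h, if_neg h]; ring
  rw [Finset.sum_congr rfl (fun j _ => h j), Finset.sum_sub_distrib, Finset.sum_ite_eq]
  simp [hdiag i]

lemma lap_row_sum (w : Fin n → Fin n → ℝ) (hdiag : ∀ i, w i i = 0) (i : Fin n) :
    ∑ j, (if i = j then (∑ k, w i k) else -w i j) = 0 := by
  have h := lap_inner w hdiag (fun _ => 1) i
  simpa using h

lemma lap_quad (w : Fin n → Fin n → ℝ) (hsymm : ∀ i j, w i j = w j i)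
    (hdiag : ∀ i, w i i = 0) (x : Fin n → ℝ) :
    x ⬝ᵥ (Matrix.of fun i j => if i = j then (∑ k, w i k) else -w i j) *ᵥ x
      = (1/2) * ∑ i, ∑ j, w i j * (x i - x j)^2 := by
  have hlhs : x ⬝ᵥ (Matrix.of fun i j => if i = j then (∑ k, w i k) else -w i j) *ᵥ x
      = ∑ i, (x i * ((∑ k, w i k) * x i - ∑ j, w i j * x j)) := by
    simp only [dotProduct, mulVec, Matrix.of_apply]
    exact Finset.sum_congr rfl fun i _ => by rw [lap_inner w hdiag x i]
  rw [hlhs]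
  have hswap : ∑ i, ∑ j, w i j * x j ^ 2 = ∑ i, ∑ j, w i j * x i ^ 2 := by
    rw [Finset.sum_comm]
    refine Finset.sum_congr rfl fun i _ => Finset.sum_congr rfl fun j _ => by rw [hsymm]
  have hexp : ∑ i, ∑ j, w i j * (x i - x j)^2
      = (∑ i, ∑ j, w i j * x i ^ 2) - 2 * (∑ i, ∑ j, w i j * (x i * x j))
        + ∑ i, ∑ j, w i j * x j ^ 2 := by
    simp only [← Finset.sum_add_distrib, ← Finset.sum_sub_distrib, Finset.mul_sum]
    refine Finset.sum_congr rfl fun i _ => Finset.sum_congr rfl fun j _ => by ring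
  have hlhs2 : ∑ i, (x i * ((∑ k, w i k) * x i - ∑ j, w i j * x j))
      = (∑ i, ∑ j, w i j * x i ^ 2) - ∑ i, ∑ j, w i j * (x i * x j) := by
    rw [← Finset.sum_sub_distrib]
    refine Finset.sum_congr rfl fun i _ => ?_
    simp only [mul_sub, Finset.mul_sum, Finset.sum_mul, ← Finset.sum_sub_distrib]
    exact Finset.sum_congr rfl fun j _ => by ring
  rw [hlhs2, hexp, hswap]
  ring

lemma lap_quad_nonneg (w : Fin n → Fin n → ℝ) (hsymm : ∀ i j, w i j = w j i)
    (hdiag : ∀ i, w i i = 0) (hnn : ∀ i j, 0 ≤ w i j) (x : Fin n → ℝ) :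
    0 ≤ x ⬝ᵥ (Matrix.of fun i j => if i = j then (∑ k, w i k) else -w i j) *ᵥ x := by
  rw [lap_quad w hsymm hdiag]
  have h : 0 ≤ ∑ i, ∑ j, w i j * (x i - x j)^2 :=
    Finset.sum_nonneg fun i _ => Finset.sum_nonneg fun j _ =>
      mul_nonneg (hnn i j) (sq_nonneg _)
  linarith

lemma col_mulVec {A : Matrix (Fin n) (Fin n) ℝ} (hA : A.IsHermitian) (k : Fin n) :
    A *ᵥ (fun m => (hA.eigenvectorUnitary : Matrix (Fin n) (Fin n) ℝ) m k)
      = hA.eigenvalues k • fun m => (hA.eigenvectorUnitary : Matrix (Fin n) (Fin n) ℝ) m k := by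
  set V := (hA.eigenvectorUnitary : Matrix (Fin n) (Fin n) ℝ) with hVdef
  have hcol : (fun m => V m k) = V *ᵥ Pi.single k 1 := by
    ext m; simp [mulVec_single]
  rw [hcol, mulVec_mulVec]
  conv_lhs => rw [spectral_real hA]
  rw [← hVdef, mul_assoc (V * diagonal hA.eigenvalues) Vᵀ V, unitary_tV hA, mul_one]
  rw [← mulVec_mulVec, diagonal_mulVec_single]
  have hs : (Pi.single k (hA.eigenvalues k * 1) : Fin n → ℝ)
      = hA.eigenvalues k • (Pi.single k 1 : Fin n → ℝ) := by
    ext m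
    by_cases h : m = k
    · subst h; simp
    · simp [h]
  rw [hs, mulVec_smul]

lemma col_orth {A : Matrix (Fin n) (Fin n) ℝ} (hA : A.IsHermitian) (k₁ k₂ : Fin n) :
    ∑ m, (hA.eigenvectorUnitary : Matrix (Fin n) (Fin n) ℝ) m k₁ *
      (hA.eigenvectorUnitary : Matrix (Fin n) (Fin n) ℝ) m k₂
      = if k₁ = k₂ then 1 else 0 := by
  have h := congrFun (congrFun (unitary_tV hA) k₁) k₂
  rw [Matrix.mul_apply] at h
  simp only [Matrix.transpose_apply] at h
  rw [h, Matrix.one_apply]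

lemma two_le_count_of_get {l : List ℝ} (h0 : 0 < l.length) (h1 : 1 < l.length)
    (ha : l.get ⟨0, h0⟩ = 0) (hb : l.get ⟨1, h1⟩ = 0) : 2 ≤ l.count 0 := by
  match l, h0, h1, ha, hb with
  | a :: b :: t, _, _, ha, hb =>
    simp only [List.get] at ha hb
    subst ha; subst hb
    have hc : List.count (0:ℝ) (0 :: 0 :: t) = List.count (0:ℝ) t + 1 + 1 := by
      rw [List.count_cons, List.count_cons]
      simp
    rw [hc]
    omega

lemma exists_two_of_two_le_count {m : ℕ} {α : Type*} [DecidableEq α] {f : Fin m → α} {b : α}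
    (h : 2 ≤ Multiset.count b (Finset.univ.val.map f)) :
    ∃ k₁ k₂ : Fin m, k₁ ≠ k₂ ∧ f k₁ = b ∧ f k₂ = b := by
  rw [Multiset.count_map] at h
  have h2 : 1 < (Finset.univ.filter (fun k => b = f k)).card := by
    rw [Finset.card_def, Finset.filter_val]
    omega
  obtain ⟨k₁, hk₁, k₂, hk₂, hne⟩ := Finset.one_lt_card.mp h2
  exact ⟨k₁, k₂, hne, (Finset.mem_filter.mp hk₁).2.symm, (Finset.mem_filter.mp hk₂).2.symm⟩

end Stmt3Aux


/-- Lichnerowicz-type inequality for the node ε-repelling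
curvature. -/
theorem stmt3 {n : ℕ} (Γ : SignedGraph n) (hpc : Γ.PosConnected)
    (ε : ℝ) (hε0 : 0 < ε) (hε : ε < Γ.consensusIndex)
    (K : ℝ) (hK : 0 < K) (hcurv : ∀ i : Fin n, K ≤ Γ.tau ε i) :
    2 * K / (n : ℝ) ≤ secondSmallestEig (Γ.Leps ε) := by
  classical
  have hn0 : 0 < n := Fin.pos_iff_nonempty.mpr hpc.nonempty
  have hn0' : (0:ℝ) < (n:ℝ) := by exact_mod_cast hn0
  by_cases hinv : IsUnit (Γ.costMatrix ε).det
  case neg =>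
    exfalso
    have htau : Γ.tau ε = 0 := by
      rw [SignedGraph.tau, Matrix.nonsing_inv_apply_not_isUnit _ hinv, Matrix.zero_mulVec]
    have h := hcurv ⟨0, hn0⟩
    rw [htau] at h
    simp only [Pi.zero_apply] at h
    linarith
  case pos =>
  have hΩτ : Γ.costMatrix ε *ᵥ Γ.tau ε = fun _ => (n:ℝ) := by
    rw [SignedGraph.tau, Matrix.mulVec_mulVec, Matrix.mul_nonsing_inv _ hinv, Matrix.one_mulVec]
  have hn2 : 2 ≤ n := by
    by_contra hlt2
    have hn1 : n = 1 := by omega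
    subst hn1
    have h00 : Γ.cost ε 0 0 = 0 := by
      rw [SignedGraph.cost]
      simp
    rw [Matrix.det_fin_one, show Γ.costMatrix ε 0 0 = Γ.cost ε 0 0 from rfl, h00] at hinv
    exact (by simp : ¬ IsUnit (0:ℝ)) hinv
  -- extract ε' from the consensus index
  have hSne : {δ : ℝ | 0 < δ ∧ (Γ.Leps δ).PosSemidef ∧ (Γ.Leps δ).rank = n - 1}.Nonempty := by
    by_contra h
    rw [Set.not_nonempty_iff_eq_empty] at h
    have h2 : Γ.consensusIndex = sSup (∅ : Set ℝ) := by rw [SignedGraph.consensusIndex, h]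
    rw [h2, Real.sSup_empty] at hε
    linarith
  have hlt : ε < sSup {δ : ℝ | 0 < δ ∧ (Γ.Leps δ).PosSemidef ∧ (Γ.Leps δ).rank = n - 1} := hε
  obtain ⟨ε', hε'S, hεε'⟩ := exists_lt_of_lt_csSup hSne hlt
  obtain ⟨hε'pos, hPSD', hrank'⟩ := hε'S
  -- Laplacian basics
  have hLpof : Γ.Lplus = Matrix.of (fun i j => if i = j then (∑ k, Γ.wplus i k) else -Γ.wplus i j) := rfl
  have hLmof : Γ.Lminus = Matrix.of (fun i j => if i = j then (∑ k, Γ.wminus i k) else -Γ.wminus i j) := rfl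
  have hsymEnt : ∀ (δ : ℝ) (i j : Fin n), Γ.Leps δ j i = Γ.Leps δ i j := by
    intro δ i j
    by_cases h : i = j
    · subst h; rfl
    · simp only [SignedGraph.Leps, hLpof, hLmof, Matrix.sub_apply, Matrix.smul_apply,
        smul_eq_mul, Matrix.of_apply, if_neg h, if_neg (Ne.symm h)]
      rw [Γ.wplus_symm j i, Γ.wminus_symm j i]
  have hherm : ∀ δ : ℝ, (Γ.Leps δ).IsHermitian := by
    intro δ
    rw [Matrix.IsHermitian]
    ext i j
    rw [Matrix.conjTranspose_apply, star_trivial]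
    exact hsymEnt δ i j
  have hrowsum : ∀ (δ : ℝ) (i : Fin n), ∑ j, Γ.Leps δ i j = 0 := by
    intro δ i
    have hp := Stmt3Aux.lap_row_sum Γ.wplus Γ.wplus_diag i
    have hm := Stmt3Aux.lap_row_sum Γ.wminus Γ.wminus_diag i
    simp only [SignedGraph.Leps, hLpof, hLmof, Matrix.sub_apply, Matrix.smul_apply,
      smul_eq_mul, Matrix.of_apply, Finset.sum_sub_distrib, ← Finset.mul_sum]
    rw [hp, hm]
    ring
  have hstar : ∀ x : Fin n → ℝ, star x = x := fun x => funext fun i => star_trivial _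
  have hq' : ∀ x : Fin n → ℝ, 0 ≤ x ⬝ᵥ Γ.Leps ε' *ᵥ x := by
    intro x
    have h := hPSD'.dotProduct_mulVec_nonneg x
    rwa [hstar] at h
  have hqp : ∀ x : Fin n → ℝ, 0 ≤ x ⬝ᵥ Γ.Lplus *ᵥ x := by
    intro x
    rw [hLpof]
    exact Stmt3Aux.lap_quad_nonneg Γ.wplus Γ.wplus_symm Γ.wplus_diag Γ.wplus_nonneg x
  have hε'ne : ε' ≠ 0 := ne_of_gt hε'pos
  have hdecomp : ∀ x : Fin n → ℝ, x ⬝ᵥ Γ.Leps ε *ᵥ x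
      = (ε/ε') * (x ⬝ᵥ Γ.Leps ε' *ᵥ x) + (1 - ε/ε') * (x ⬝ᵥ Γ.Lplus *ᵥ x) := by
    intro x
    have hM : Γ.Leps ε = (ε/ε') • (Γ.Leps ε') + (1 - ε/ε') • Γ.Lplus := by
      ext i j
      simp only [SignedGraph.Leps, Matrix.sub_apply, Matrix.add_apply, Matrix.smul_apply,
        smul_eq_mul]
      field_simp
      ring
    rw [hM, Matrix.add_mulVec, Matrix.smul_mulVec, Matrix.smul_mulVec,
      dotProduct_add, dotProduct_smul, dotProduct_smul, smul_eq_mul, smul_eq_mul]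
  have hcoef1 : 0 < ε/ε' := div_pos hε0 hε'pos
  have hcoef2 : 0 < 1 - ε/ε' := by
    have h := (div_lt_one hε'pos).mpr hεε'
    linarith
  have hpsd : (Γ.Leps ε).PosSemidef := by
    refine Matrix.PosSemidef.of_dotProduct_mulVec_nonneg (hherm ε) fun x => ?_
    rw [hstar, hdecomp x]
    exact add_nonneg (mul_nonneg hcoef1.le (hq' x)) (mul_nonneg hcoef2.le (hqp x))
  have hLone : ∀ δ : ℝ, Γ.Leps δ *ᵥ (fun _ => (1:ℝ)) = 0 := by
    intro δ; ext i
    simp only [Matrix.mulVec, dotProduct, mul_one, Pi.zero_apply]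
    exact hrowsum δ i
  have hone_ne : (fun _ => (1:ℝ)) ≠ (0 : Fin n → ℝ) := by
    intro h
    have h0 := congrFun h ⟨0, hn0⟩
    simpa using h0
  have hker : ∀ x : Fin n → ℝ, Γ.Leps ε *ᵥ x = 0 → ∃ c : ℝ, x = fun _ => c := by
    intro x hx
    have h0 : x ⬝ᵥ Γ.Leps ε *ᵥ x = 0 := by rw [hx, dotProduct_zero]
    rw [hdecomp x] at h0
    have h1 : x ⬝ᵥ Γ.Leps ε' *ᵥ x = 0 := by
      nlinarith [hq' x, hqp x]
    have h2 : Γ.Leps ε' *ᵥ x = 0 := by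
      refine (hPSD'.dotProduct_mulVec_zero_iff x).mp ?_
      rw [hstar]; exact h1
    have h1mem : (fun _ => (1:ℝ)) ∈ LinearMap.ker (Γ.Leps ε').mulVecLin := by
      rw [LinearMap.mem_ker, Matrix.mulVecLin_apply]
      exact hLone ε'
    have hdim := LinearMap.finrank_range_add_finrank_ker (Γ.Leps ε').mulVecLin
    rw [Module.finrank_fin_fun] at hdim
    have hrk : Module.finrank ℝ (LinearMap.range (Γ.Leps ε').mulVecLin) = n - 1 := hrank'
    have hkdim : Module.finrank ℝ (LinearMap.ker (Γ.Leps ε').mulVecLin) = 1 := by omega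
    have hspan : Submodule.span ℝ {(fun _ => (1:ℝ))} ≤ LinearMap.ker (Γ.Leps ε').mulVecLin := by
      rw [Submodule.span_le, Set.singleton_subset_iff]
      exact h1mem
    have heq : Submodule.span ℝ {(fun _ => (1:ℝ))} = LinearMap.ker (Γ.Leps ε').mulVecLin :=
      Submodule.eq_of_le_of_finrank_le hspan
        (by rw [hkdim, finrank_span_singleton hone_ne])
    have hxmem : x ∈ Submodule.span ℝ ({(fun _ => (1:ℝ))} : Set (Fin n → ℝ)) := by
      rw [heq, LinearMap.mem_ker, Matrix.mulVecLin_apply]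
      exact h2
    obtain ⟨c, hc⟩ := Submodule.mem_span_singleton.mp hxmem
    refine ⟨c, ?_⟩
    rw [← hc]; ext i; simp
  -- spectral setup
  have hH : (Γ.Leps ε).IsHermitian := hherm ε
  set V : Matrix (Fin n) (Fin n) ℝ := (hH.eigenvectorUnitary : Matrix (Fin n) (Fin n) ℝ) with hVdef
  have hμnn : ∀ k, 0 ≤ hH.eigenvalues k := fun k => hpsd.eigenvalues_nonneg k
  have hlen : (sortedEigs (Γ.Leps ε)).length = n := by
    rw [sortedEigs, dif_pos hH, Multiset.length_sort]
    simp
  have h1lt : 1 < (sortedEigs (Γ.Leps ε)).length := by omega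
  have h0lt : 0 < (sortedEigs (Γ.Leps ε)).length := by omega
  have hgetD : secondSmallestEig (Γ.Leps ε) = (sortedEigs (Γ.Leps ε)).get ⟨1, h1lt⟩ := by
    rw [secondSmallestEig, List.getD_eq_getElem?_getD, List.getElem?_eq_getElem h1lt]; rfl
  have hmem_iff : ∀ a : ℝ, a ∈ sortedEigs (Γ.Leps ε) → ∃ k, hH.eigenvalues k = a := by
    intro a ha
    rw [sortedEigs, dif_pos hH, Multiset.mem_sort] at ha
    obtain ⟨k, _, hk⟩ := Multiset.mem_map.mp ha
    exact ⟨k, hk⟩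
  have hsorted : (sortedEigs (Γ.Leps ε)).Pairwise (· ≤ ·) := by
    rw [sortedEigs, dif_pos hH]
    exact Multiset.pairwise_sort _ _
  have hlnn : ∀ a ∈ sortedEigs (Γ.Leps ε), 0 ≤ a := by
    intro a ha
    obtain ⟨k, hk⟩ := hmem_iff a ha
    rw [← hk]; exact hμnn k
  have hlam_nn : 0 ≤ secondSmallestEig (Γ.Leps ε) := by
    rw [hgetD]; exact hlnn _ (List.get_mem _ _)
  have hlam_pos : 0 < secondSmallestEig (Γ.Leps ε) := by
    rcases lt_or_eq_of_le hlam_nn with h | h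
    · exact h
    exfalso
    have hb : (sortedEigs (Γ.Leps ε)).get ⟨1, h1lt⟩ = 0 := by rw [← hgetD, ← h]
    have hle01 : (sortedEigs (Γ.Leps ε)).get ⟨0, h0lt⟩ ≤ (sortedEigs (Γ.Leps ε)).get ⟨1, h1lt⟩ :=
      hsorted.rel_get_of_lt (by simp [Fin.mk_lt_mk])
    have ha : (sortedEigs (Γ.Leps ε)).get ⟨0, h0lt⟩ = 0 :=
      le_antisymm (hb ▸ hle01) (hlnn _ (List.get_mem _ _))
    have hcnt : 2 ≤ (sortedEigs (Γ.Leps ε)).count 0 :=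
      Stmt3Aux.two_le_count_of_get h0lt h1lt ha hb
    have hcnt2 : 2 ≤ Multiset.count 0 (Finset.univ.val.map hH.eigenvalues) := by
      have hs : (sortedEigs (Γ.Leps ε))
          = Multiset.sort (Finset.univ.val.map hH.eigenvalues) (· ≤ ·) := by
        rw [sortedEigs, dif_pos hH]
      rw [hs] at hcnt
      rw [← Multiset.sort_eq (Finset.univ.val.map hH.eigenvalues) (· ≤ ·), Multiset.coe_count]
      exact hcnt
    obtain ⟨k₁, k₂, hk12, hk₁, hk₂⟩ := Stmt3Aux.exists_two_of_two_le_count hcnt2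
    have hv₁ : Γ.Leps ε *ᵥ (fun m => V m k₁) = 0 := by
      have h' := Stmt3Aux.col_mulVec hH k₁
      rw [← hVdef] at h'
      rw [h', hk₁, zero_smul]
    have hv₂ : Γ.Leps ε *ᵥ (fun m => V m k₂) = 0 := by
      have h' := Stmt3Aux.col_mulVec hH k₂
      rw [← hVdef] at h'
      rw [h', hk₂, zero_smul]
    obtain ⟨c₁, hc₁⟩ := hker _ hv₁
    obtain ⟨c₂, hc₂⟩ := hker _ hv₂
    have ho12 := Stmt3Aux.col_orth hH k₁ k₂
    have ho11 := Stmt3Aux.col_orth hH k₁ k₁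
    have ho22 := Stmt3Aux.col_orth hH k₂ k₂
    rw [← hVdef] at ho12 ho11 ho22
    rw [if_neg hk12] at ho12
    rw [if_pos rfl] at ho11
    rw [if_pos rfl] at ho22
    have e1 : ∑ _m : Fin n, c₁ * c₂ = 0 := by
      rw [← ho12]
      exact Finset.sum_congr rfl fun m _ => by
        rw [congrFun hc₁ m, congrFun hc₂ m]
    have e2 : ∑ _m : Fin n, c₁ * c₁ = 1 := by
      rw [← ho11]
      exact Finset.sum_congr rfl fun m _ => by rw [congrFun hc₁ m]
    have e3 : ∑ _m : Fin n, c₂ * c₂ = 1 := by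
      rw [← ho22]
      exact Finset.sum_congr rfl fun m _ => by rw [congrFun hc₂ m]
    rw [Finset.sum_const, Finset.card_univ, Fintype.card_fin, nsmul_eq_mul] at e1 e2 e3
    have hcontra : ((n:ℝ) * (c₁*c₂))^2 = ((n:ℝ)*(c₁*c₁)) * ((n:ℝ)*(c₂*c₂)) := by ring
    rw [e1, e2, e3] at hcontra
    norm_num at hcontra
  -- the Fiedler eigenvector
  have hmem2 : secondSmallestEig (Γ.Leps ε) ∈ sortedEigs (Γ.Leps ε) := by
    rw [hgetD]; exact List.get_mem _ _
  obtain ⟨k₀, hk₀⟩ := hmem_iff _ hmem2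
  have hψeig := Stmt3Aux.col_mulVec hH k₀
  rw [← hVdef] at hψeig
  have hψnorm2 : ∑ m, (V m k₀)^2 = 1 := by
    have ho := Stmt3Aux.col_orth hH k₀ k₀
    rw [← hVdef] at ho
    rw [if_pos rfl] at ho
    rw [← ho]
    exact Finset.sum_congr rfl fun m _ => by ring
  have hψsum : ∑ m, V m k₀ = 0 := by
    have h1 : ∑ i, (Γ.Leps ε *ᵥ (fun m => V m k₀)) i = 0 := by
      simp only [Matrix.mulVec, dotProduct]
      rw [Finset.sum_comm]
      have hcol0 : ∀ j, ∑ i, Γ.Leps ε i j * V j k₀ = 0 := by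
        intro j
        rw [← Finset.sum_mul]
        have hz : ∑ i, Γ.Leps ε i j = 0 := by
          rw [Finset.sum_congr rfl (fun i _ => hsymEnt ε j i)]
          exact hrowsum ε j
        rw [hz, zero_mul]
      rw [Finset.sum_congr rfl fun j _ => hcol0 j]
      simp
    rw [hψeig] at h1
    simp only [Pi.smul_apply, smul_eq_mul, ← Finset.mul_sum] at h1
    have hlamne : hH.eigenvalues k₀ ≠ 0 := by
      rw [hk₀]; exact ne_of_gt hlam_pos
    exact (mul_eq_zero.mp h1).resolve_left hlamne
  -- cost lower bound
  have hpinv := Stmt3Aux.pinv_spectral hH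
  rw [← hVdef] at hpinv
  have hcost : ∀ i j : Fin n,
      (V i k₀ - V j k₀)^2 / secondSmallestEig (Γ.Leps ε) ≤ Γ.cost ε i j := by
    intro i j
    rw [SignedGraph.cost, hpinv, Stmt3Aux.conj_quad]
    have hterm : ∀ k, 0 ≤ (hH.eigenvalues k)⁻¹
        * ((Vᵀ *ᵥ (Pi.single i 1 - Pi.single j 1)) k)^2 :=
      fun k => mul_nonneg (inv_nonneg.mpr (hμnn k)) (sq_nonneg _)
    have hsingle := Finset.single_le_sum
      (f := fun k => (hH.eigenvalues k)⁻¹ * ((Vᵀ *ᵥ (Pi.single i 1 - Pi.single j 1)) k)^2)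
      (fun k _ => hterm k) (Finset.mem_univ k₀)
    have hval : (Vᵀ *ᵥ (Pi.single i 1 - Pi.single j 1)) k₀ = V i k₀ - V j k₀ := by
      simp only [Matrix.mulVec, dotProduct, Matrix.transpose_apply, Pi.sub_apply,
        Pi.single_apply, mul_sub, Finset.sum_sub_distrib, mul_ite, mul_one, mul_zero]
      rw [Finset.sum_ite_eq' Finset.univ i (fun m => V m k₀),
        Finset.sum_ite_eq' Finset.univ j (fun m => V m k₀)]
      simp
    calc (V i k₀ - V j k₀)^2 / secondSmallestEig (Γ.Leps ε)
        = (hH.eigenvalues k₀)⁻¹ * ((Vᵀ *ᵥ (Pi.single i 1 - Pi.single j 1)) k₀)^2 := by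
          rw [hval, hk₀, div_eq_mul_inv]; ring
    _ ≤ _ := hsingle
  -- the main estimate
  have hrow_i : ∀ i, ∑ j, Γ.cost ε i j * Γ.tau ε j = (n:ℝ) := by
    intro i
    have h := congrFun hΩτ i
    simpa [Matrix.mulVec, dotProduct, SignedGraph.costMatrix] using h
  have hbound : ∀ i, ∑ j, ((V i k₀ - V j k₀)^2 / secondSmallestEig (Γ.Leps ε)) * K ≤ (n:ℝ) := by
    intro i
    rw [← hrow_i i]
    refine Finset.sum_le_sum fun j _ => ?_
    have h1 := hcost i j
    have h2 : 0 ≤ (V i k₀ - V j k₀)^2 / secondSmallestEig (Γ.Leps ε) :=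
      div_nonneg (sq_nonneg _) hlam_nn
    exact mul_le_mul h1 (hcurv j) hK.le (h2.trans h1)
  have hsum : (∑ i, ∑ j, (V i k₀ - V j k₀)^2) / secondSmallestEig (Γ.Leps ε) * K
      ≤ (n:ℝ) * n := by
    have h1 : ∑ i : Fin n, (n:ℝ) = (n:ℝ) * n := by
      rw [Finset.sum_const, Finset.card_univ, Fintype.card_fin, nsmul_eq_mul]
    have h2 : (∑ i, ∑ j, (V i k₀ - V j k₀)^2) / secondSmallestEig (Γ.Leps ε) * K
        = ∑ i, ∑ j, ((V i k₀ - V j k₀)^2 / secondSmallestEig (Γ.Leps ε)) * K := by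
      rw [Finset.sum_div, Finset.sum_mul]
      refine Finset.sum_congr rfl fun i _ => ?_
      rw [Finset.sum_div, Finset.sum_mul]
    rw [h2, ← h1]
    exact Finset.sum_le_sum fun i _ => hbound i
  have hT : ∑ i, ∑ j, (V i k₀ - V j k₀)^2 = 2 * n := by
    calc ∑ i, ∑ j, (V i k₀ - V j k₀)^2
        = ∑ i, ∑ j, ((V i k₀)^2 + (V j k₀)^2 - 2 * (V i k₀ * V j k₀)) :=
          Finset.sum_congr rfl fun i _ => Finset.sum_congr rfl fun j _ => by ring
    _ = ∑ i : Fin n, ((n:ℝ) * (V i k₀)^2 + 1 - 2 * (V i k₀ * ∑ m, V m k₀)) := by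
          refine Finset.sum_congr rfl fun i _ => ?_
          rw [Finset.sum_sub_distrib, Finset.sum_add_distrib, Finset.sum_const,
            Finset.card_univ, Fintype.card_fin, nsmul_eq_mul, hψnorm2, ← Finset.mul_sum,
            ← Finset.mul_sum]
    _ = 2 * n := by
          have h3 : ∀ i : Fin n, (n:ℝ) * (V i k₀)^2 + 1 - 2 * (V i k₀ * ∑ m, V m k₀)
              = (n:ℝ) * (V i k₀)^2 + 1 := fun i => by rw [hψsum]; ring
          rw [Finset.sum_congr rfl fun i _ => h3 i, Finset.sum_add_distrib, Finset.sum_const,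
            Finset.card_univ, Fintype.card_fin, nsmul_eq_mul, mul_one, ← Finset.mul_sum, hψnorm2]
          ring
  rw [hT] at hsum
  rw [div_le_iff₀ hn0']
  have hsum2 : 2 * (n:ℝ) * K ≤ (n:ℝ) * n * secondSmallestEig (Γ.Leps ε) := by
    rw [div_mul_eq_mul_div, div_le_iff₀ hlam_pos] at hsum
    linarith
  nlinarith [hsum2, hn0', hlam_pos]
end

section
/- Let (G,σ,w) be a positive-connected signed graph with consensus index ε₀, and let 0 < ε < ε₀. Then the function (i,j) ↦ √(Ω_ε(i,j)) is a metric on the vertex set V: it is nonnegative, vanishes exactly on the diagonal, is symmetric, and satisfies the triangle inequality √(Ω_ε(i,j)) ≤ √(Ω_ε(i,k)) + √(Ω_ε(k,j)) for all i,j,k ∈ V. -/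
open Matrix BigOperators

open scoped Classical

def Penrose (A B : Matrix (Fin n) (Fin n) ℝ) : Prop :=
  A * B * A = A ∧ B * A * B = B ∧ (A * B)ᵀ = A * B ∧ (B * A)ᵀ = B * A

lemma penrose_unique {A B C : Matrix (Fin n) (Fin n) ℝ}
    (hB : Penrose A B) (hC : Penrose A C) : B = C := by
  obtain ⟨hB1, hB2, hB3, hB4⟩ := hB
  obtain ⟨hC1, hC2, hC3, hC4⟩ := hC
  have hAB : A * B = A * C := by
    calc A * B = (A * C * A) * B := by rw [hC1]
    _ = (A * C) * (A * B) := by rw [mul_assoc]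
    _ = (A * C)ᵀ * (A * B)ᵀ := by rw [hC3, hB3]
    _ = ((A * B * A) * C)ᵀ := by rw [← Matrix.transpose_mul]; simp only [mul_assoc]
    _ = (A * C)ᵀ := by rw [hB1]
    _ = A * C := hC3
  have hBA : B * A = C * A := by
    calc B * A = B * (A * C * A) := by rw [hC1]
    _ = (B * A) * (C * A) := by simp only [mul_assoc]
    _ = (B * A)ᵀ * (C * A)ᵀ := by rw [hB4, hC4]
    _ = (C * (A * B * A))ᵀ := by rw [← Matrix.transpose_mul]; simp only [mul_assoc]
    _ = (C * A)ᵀ := by rw [hB1]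
    _ = C * A := hC4
  calc B = B * A * B := hB2.symm
  _ = C * A * B := by rw [hBA]
  _ = C * (A * B) := by rw [mul_assoc]
  _ = C * (A * C) := by rw [hAB]
  _ = C := by rw [← mul_assoc, hC2]

lemma exists_penrose {A : Matrix (Fin n) (Fin n) ℝ} (hA : A.IsHermitian) :
    ∃ B, Penrose A B := by
  classical
  set U : Matrix (Fin n) (Fin n) ℝ := (hA.eigenvectorUnitary : Matrix (Fin n) (Fin n) ℝ)
  have hU : star U * U = 1 := (Matrix.mem_unitaryGroup_iff').mp hA.eigenvectorUnitary.2
  set lam : Fin n → ℝ := hA.eigenvalues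
  set g : Fin n → ℝ := fun i => if lam i = 0 then 0 else (lam i)⁻¹
  have hspec : A = U * Matrix.diagonal lam * star U := by
    have := hA.spectral_theorem
    simpa using this
  have key : ∀ f h : Fin n → ℝ,
      (U * Matrix.diagonal f * star U) * (U * Matrix.diagonal h * star U)
        = U * Matrix.diagonal (fun i => f i * h i) * star U := by
    intro f h
    calc (U * Matrix.diagonal f * star U) * (U * Matrix.diagonal h * star U)
        = U * Matrix.diagonal f * ((star U * U) * (Matrix.diagonal h * star U)) := by
          simp only [mul_assoc]
      _ = U * (Matrix.diagonal f * Matrix.diagonal h) * star U := by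
          rw [hU, one_mul]; simp only [mul_assoc]
      _ = U * Matrix.diagonal (fun i => f i * h i) * star U := by
          rw [Matrix.diagonal_mul_diagonal]
  have keyT : ∀ f : Fin n → ℝ,
      (U * Matrix.diagonal f * star U)ᵀ = U * Matrix.diagonal f * star U := by
    intro f
    have h2 : (U * Matrix.diagonal f * star U).IsHermitian := by
      have := Matrix.isHermitian_mul_mul_conjTranspose U
        (Matrix.isHermitian_diagonal f)
      simpa [Matrix.star_eq_conjTranspose] using this
    rw [← Matrix.conjTranspose_eq_transpose_of_trivial]
    exact h2
  have hgl : ∀ i, lam i * g i * lam i = lam i := by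
    intro i; by_cases h : lam i = 0 <;> simp [g, h]
  have hlg : ∀ i, g i * lam i * g i = g i := by
    intro i; by_cases h : lam i = 0 <;> simp [g, h]
  refine ⟨U * Matrix.diagonal g * star U, ?_, ?_, ?_, ?_⟩
  · rw [hspec, key, key]
    exact congrArg (fun d => U * Matrix.diagonal d * star U) (funext hgl)
  · rw [hspec, key, key]
    exact congrArg (fun d => U * Matrix.diagonal d * star U) (funext hlg)
  · rw [hspec, key]; exact keyT _
  · rw [hspec, key]; exact keyT _

variable {n : ℕ} {A : Matrix (Fin n) (Fin n) ℝ}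

lemma pinv_penrose (hA : A.IsHermitian) : Penrose A (pinv A) := by
  have h : ∃ B : Matrix (Fin n) (Fin n) ℝ,
      A * B * A = A ∧ B * A * B = B ∧ (A * B)ᵀ = A * B ∧ (B * A)ᵀ = B * A :=
    exists_penrose hA
  rw [pinv, dif_pos h]
  exact h.choose_spec

lemma isHermitian_transpose_eq (hA : A.IsHermitian) : Aᵀ = A := by
  rw [← Matrix.conjTranspose_eq_transpose_of_trivial]; exact hA

lemma penrose_transpose {B : Matrix (Fin n) (Fin n) ℝ} (hA : A.IsHermitian)
    (hP : Penrose A B) : Penrose A Bᵀ := by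
  obtain ⟨h1, h2, h3, h4⟩ := hP
  have hAT : Aᵀ = A := isHermitian_transpose_eq hA
  have e4 : A * Bᵀ = B * A := by
    rw [← h4, Matrix.transpose_mul, hAT]
  have e3 : Bᵀ * A = A * B := by
    rw [← h3, Matrix.transpose_mul, hAT]
  have t1 : (A * B * A)ᵀ = A * Bᵀ * A := by
    rw [Matrix.transpose_mul, Matrix.transpose_mul, hAT]
    simp only [mul_assoc]
  have t2 : (B * A * B)ᵀ = Bᵀ * A * Bᵀ := by
    rw [Matrix.transpose_mul, Matrix.transpose_mul, hAT]
    simp only [mul_assoc]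
  refine ⟨?_, ?_, ?_, ?_⟩
  · rw [← t1, h1, hAT]
  · rw [← t2, h2]
  · rw [e4, h4]
  · rw [e3, h3]

lemma pinv_transpose (hA : A.IsHermitian) : (pinv A)ᵀ = pinv A :=
  penrose_unique (penrose_transpose hA (pinv_penrose hA)) (pinv_penrose hA)

lemma pinv_quadform_nonneg (hA : A.PosSemidef) (x : Fin n → ℝ) :
    0 ≤ x ⬝ᵥ (pinv A) *ᵥ x := by
  obtain ⟨h1, h2, h3, h4⟩ := pinv_penrose hA.1
  set B := pinv A with hBdef
  have hBT : Bᵀ = B := pinv_transpose hA.1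
  have key : x ⬝ᵥ B *ᵥ x = (B *ᵥ x) ⬝ᵥ A *ᵥ (B *ᵥ x) := by
    conv_lhs => rw [← h2]
    rw [← Matrix.mulVec_mulVec, ← Matrix.mulVec_mulVec, Matrix.dotProduct_mulVec x B,
      ← Matrix.mulVec_transpose, hBT]
  rw [key]
  have := hA.dotProduct_mulVec_nonneg (B *ᵥ x)
  simpa using this
section Lap
variable {n : ℕ} (w : Fin n → Fin n → ℝ)

/-- generic weighted Laplacian -/
noncomputable def lapM : Matrix (Fin n) (Fin n) ℝ :=
  Matrix.of fun i j => if i = j then ∑ k, w i k else -w i j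

lemma lapM_mulVec (hdiag : ∀ i, w i i = 0) (x : Fin n → ℝ) (i : Fin n) :
    (lapM w *ᵥ x) i = (∑ k, w i k) * x i - ∑ j, w i j * x j := by
  have : (lapM w *ᵥ x) i = ∑ j, (if i = j then ∑ k, w i k else -w i j) * x j := by
    simp [lapM, Matrix.mulVec, dotProduct]
  rw [this]
  have step : ∀ j : Fin n, (if i = j then ∑ k, w i k else -w i j) * x j
      = (if i = j then (∑ k, w i k) * x j + w i j * x j else 0) - w i j * x j := by
    intro j
    by_cases h : i = j
    · subst h; simp [hdiag i]
    · simp [h]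
  rw [Finset.sum_congr rfl fun j _ => step j, Finset.sum_sub_distrib,
    Finset.sum_ite_eq Finset.univ i (fun j => (∑ k, w i k) * x j + w i j * x j)]
  simp [hdiag i]

lemma lapM_quadform (hsymm : ∀ i j, w i j = w j i) (hdiag : ∀ i, w i i = 0) (x : Fin n → ℝ) :
    x ⬝ᵥ lapM w *ᵥ x = (1/2) * ∑ i, ∑ j, w i j * (x i - x j)^2 := by
  have expand : x ⬝ᵥ lapM w *ᵥ x
      = (∑ i, ∑ j, w i j * (x i * x i)) - ∑ i, ∑ j, w i j * (x i * x j) := by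
    rw [dotProduct]
    calc ∑ i, x i * (lapM w *ᵥ x) i
        = ∑ i, ((∑ j, w i j * (x i * x i)) - ∑ j, w i j * (x i * x j)) := by
          refine Finset.sum_congr rfl fun i _ => ?_
          rw [lapM_mulVec w hdiag x i, Finset.sum_mul, mul_sub, Finset.mul_sum, Finset.mul_sum]
          congr 1
          · exact Finset.sum_congr rfl fun j _ => by ring
          · exact Finset.sum_congr rfl fun j _ => by ring
      _ = _ := by rw [Finset.sum_sub_distrib]
  have swap : ∑ i, ∑ j, w i j * (x j * x j) = ∑ i, ∑ j, w i j * (x i * x i) := by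
    rw [Finset.sum_comm]
    exact Finset.sum_congr rfl fun i _ => Finset.sum_congr rfl fun j _ => by rw [hsymm]
  have key : ∑ i, ∑ j, w i j * (x i - x j)^2
      = ((∑ i, ∑ j, w i j * (x i * x i)) + ∑ i, ∑ j, w i j * (x j * x j))
        - ∑ i, ∑ j, 2 * (w i j * (x i * x j)) := by
    have e : ∀ i j : Fin n, w i j * (x i - x j)^2
        = (w i j * (x i * x i) + w i j * (x j * x j)) - 2 * (w i j * (x i * x j)) := by
      intro i j; ring
    rw [Finset.sum_congr rfl fun i _ => Finset.sum_congr rfl fun j _ => e i j]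
    simp only [Finset.sum_sub_distrib, Finset.sum_add_distrib]
  have twosum : ∑ i, ∑ j, 2 * (w i j * (x i * x j))
      = 2 * ∑ i, ∑ j, w i j * (x i * x j) := by
    simp [Finset.mul_sum]
  rw [expand]
  rw [twosum] at key
  linarith [key, swap]

lemma lapM_isHermitian (hsymm : ∀ i j, w i j = w j i) : (lapM w).IsHermitian := by
  rw [Matrix.IsHermitian, Matrix.conjTranspose_eq_transpose_of_trivial]
  ext i j
  simp only [lapM, Matrix.transpose_apply, Matrix.of_apply]
  by_cases h : i = j
  · subst h; simp
  · simp [h, Ne.symm h, hsymm i j]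

lemma lapM_posSemidef (hw : ∀ i j, 0 ≤ w i j) (hsymm : ∀ i j, w i j = w j i)
    (hdiag : ∀ i, w i i = 0) : (lapM w).PosSemidef := by
  refine Matrix.PosSemidef.of_dotProduct_mulVec_nonneg (lapM_isHermitian w hsymm) fun x => ?_
  have : star x = x := by simp
  rw [this, lapM_quadform w hsymm hdiag x]
  have : (0:ℝ) ≤ ∑ i, ∑ j, w i j * (x i - x j)^2 :=
    Finset.sum_nonneg fun i _ => Finset.sum_nonneg fun j _ =>
      mul_nonneg (hw i j) (sq_nonneg _)
  linarith

lemma lapM_mulVec_one (hdiag : ∀ i, w i i = 0) :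
    lapM w *ᵥ (fun _ => (1:ℝ)) = 0 := by
  funext i
  rw [lapM_mulVec w hdiag]
  simp

end Lap

section GraphLemmas
variable {n : ℕ} (Γ : SignedGraph n)

lemma Lplus_eq : Γ.Lplus = lapM Γ.wplus := rfl
lemma Lminus_eq : Γ.Lminus = lapM Γ.wminus := rfl

lemma leps_quad (ε : ℝ) (x : Fin n → ℝ) :
    x ⬝ᵥ Γ.Leps ε *ᵥ x = x ⬝ᵥ Γ.Lplus *ᵥ x - ε * (x ⬝ᵥ Γ.Lminus *ᵥ x) := by
  simp [SignedGraph.Leps, Matrix.sub_mulVec, Matrix.smul_mulVec, dotProduct_sub,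
    dotProduct_smul, smul_eq_mul]

lemma leps_hermitian (ε : ℝ) : (Γ.Leps ε).IsHermitian := by
  have h1 : (lapM Γ.wplus)ᵀ = lapM Γ.wplus :=
    isHermitian_transpose_eq (lapM_isHermitian Γ.wplus Γ.wplus_symm)
  have h2 : (lapM Γ.wminus)ᵀ = lapM Γ.wminus :=
    isHermitian_transpose_eq (lapM_isHermitian Γ.wminus Γ.wminus_symm)
  rw [Matrix.IsHermitian, Matrix.conjTranspose_eq_transpose_of_trivial, SignedGraph.Leps,
    Lplus_eq, Lminus_eq, Matrix.transpose_sub, Matrix.transpose_smul, h1, h2]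

lemma quadPlus_nonneg (x : Fin n → ℝ) : 0 ≤ x ⬝ᵥ Γ.Lplus *ᵥ x := by
  have := (lapM_posSemidef Γ.wplus Γ.wplus_nonneg Γ.wplus_symm Γ.wplus_diag).dotProduct_mulVec_nonneg x
  rw [Lplus_eq]
  simpa using this

lemma quadMinus_nonneg (x : Fin n → ℝ) : 0 ≤ x ⬝ᵥ Γ.Lminus *ᵥ x := by
  have := (lapM_posSemidef Γ.wminus Γ.wminus_nonneg Γ.wminus_symm Γ.wminus_diag).dotProduct_mulVec_nonneg x
  rw [Lminus_eq]
  simpa using this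

lemma const_of_quadPlus_zero (hpc : Γ.PosConnected) (x : Fin n → ℝ)
    (h : x ⬝ᵥ Γ.Lplus *ᵥ x = 0) : ∀ i j, x i = x j := by
  have hq : ∑ i, ∑ j, Γ.wplus i j * (x i - x j)^2 = 0 := by
    rw [Lplus_eq, lapM_quadform Γ.wplus Γ.wplus_symm Γ.wplus_diag x] at h
    linarith
  have hterm : ∀ i j : Fin n, Γ.wplus i j * (x i - x j)^2 = 0 := by
    intro i j
    have houter := (Finset.sum_eq_zero_iff_of_nonneg (fun i _ =>
      Finset.sum_nonneg fun j _ => mul_nonneg (Γ.wplus_nonneg i j) (sq_nonneg _))).mp hq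
    have hinner := (Finset.sum_eq_zero_iff_of_nonneg (fun j _ =>
      mul_nonneg (Γ.wplus_nonneg i j) (sq_nonneg _))).mp (houter i (Finset.mem_univ i))
    exact hinner j (Finset.mem_univ j)
  have hpos : ∀ i j : Fin n, 0 < Γ.wplus i j → x i = x j := by
    intro i j hw
    have := hterm i j
    have h2 : (x i - x j)^2 = 0 := by
      rcases mul_eq_zero.mp this with h | h
      · exact absurd h (ne_of_gt hw)
      · exact h
    have := pow_eq_zero_iff (n := 2) (by norm_num) |>.mp h2
    linarith
  have hadj : ∀ {u v : Fin n}, Γ.posGraph.Adj u v → x u = x v := by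
    intro u v huv
    rw [SignedGraph.posGraph, SimpleGraph.fromRel_adj] at huv
    rcases huv.2 with h | h
    · exact hpos u v h
    · exact (hpos v u h).symm
  have hwalk : ∀ {u v : Fin n} (p : Γ.posGraph.Walk u v), x u = x v := by
    intro u v p
    induction p with
    | nil => rfl
    | cons ha _ ih => exact (hadj ha).trans ih
  intro i j
  exact (hpc.preconnected i j).elim fun p => hwalk p

lemma leps_mulVec_one (ε : ℝ) : Γ.Leps ε *ᵥ (fun _ => (1:ℝ)) = 0 := by
  rw [SignedGraph.Leps, Matrix.sub_mulVec, Matrix.smul_mulVec, Lplus_eq, Lminus_eq,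
    lapM_mulVec_one Γ.wplus Γ.wplus_diag, lapM_mulVec_one Γ.wminus Γ.wminus_diag]
  simp

lemma leps_key (hpc : Γ.PosConnected) {ε : ℝ} (hε0 : 0 < ε) (hε : ε < Γ.consensusIndex) :
    (Γ.Leps ε).PosSemidef ∧ (∀ x, Γ.Leps ε *ᵥ x = 0 → ∀ i j, x i = x j) := by
  have hne : {ε' : ℝ | 0 < ε' ∧ (Γ.Leps ε').PosSemidef ∧ (Γ.Leps ε').rank = n - 1}.Nonempty := by
    by_contra h
    rw [Set.not_nonempty_iff_eq_empty] at h
    rw [SignedGraph.consensusIndex, h, Real.sSup_empty] at hε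
    linarith
  obtain ⟨ε', hmem, hlt⟩ := exists_lt_of_lt_csSup hne hε
  obtain ⟨hε'pos, hPSD', -⟩ := hmem
  have hε'ne : ε' ≠ 0 := ne_of_gt hε'pos
  have hdecomp : ∀ x : Fin n → ℝ, x ⬝ᵥ Γ.Leps ε *ᵥ x
      = (ε/ε') * (x ⬝ᵥ Γ.Leps ε' *ᵥ x) + (1 - ε/ε') * (x ⬝ᵥ Γ.Lplus *ᵥ x) := by
    intro x
    rw [leps_quad, leps_quad]
    field_simp
    ring
  have hr1 : 0 < ε / ε' := div_pos hε0 hε'pos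
  have hr2 : 0 < 1 - ε / ε' := by
    have : ε / ε' < 1 := (div_lt_one hε'pos).mpr hlt
    linarith
  have hq' : ∀ x : Fin n → ℝ, 0 ≤ x ⬝ᵥ Γ.Leps ε' *ᵥ x := by
    intro x
    have := hPSD'.dotProduct_mulVec_nonneg x
    simpa using this
  have hquad : ∀ x : Fin n → ℝ, 0 ≤ x ⬝ᵥ Γ.Leps ε *ᵥ x := by
    intro x
    rw [hdecomp x]
    have h1 := hq' x
    have h2 := quadPlus_nonneg Γ x
    nlinarith
  constructor
  · exact Matrix.PosSemidef.of_dotProduct_mulVec_nonneg (leps_hermitian Γ ε) fun x => by simpa using hquad x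
  · intro x hx
    have hq0 : x ⬝ᵥ Γ.Leps ε *ᵥ x = 0 := by rw [hx]; simp
    have hp0 : x ⬝ᵥ Γ.Lplus *ᵥ x = 0 := by
      have hd := hdecomp x
      have h1 := hq' x
      have h2 := quadPlus_nonneg Γ x
      nlinarith
    exact const_of_quadPlus_zero Γ hpc x hp0

end GraphLemmas

/-- the coordinate-sum linear functional -/
noncomputable def sumLin (n : ℕ) : (Fin n → ℝ) →ₗ[ℝ] ℝ where
  toFun x := ∑ i, x i
  map_add' a b := by simp [Finset.sum_add_distrib]
  map_smul' c a := by simp [Finset.mul_sum]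

lemma range_eq_sum_zero {n : ℕ} {A : Matrix (Fin n) (Fin n) ℝ} (hn : 0 < n)
    (hAT : Aᵀ = A) (hone : A *ᵥ (fun _ => (1:ℝ)) = 0)
    (hker : ∀ x, A *ᵥ x = 0 → ∀ i j, x i = x j)
    (v : Fin n → ℝ) (hv : ∑ i, v i = 0) : ∃ u, A *ᵥ u = v := by
  classical
  set f := A.mulVecLin with hfdef
  have hker_eq : LinearMap.ker f = Submodule.span ℝ {(fun _ => (1:ℝ))} := by
    apply le_antisymm
    · intro x hx
      have hx0 : A *ᵥ x = 0 := by
        simpa [hfdef, Matrix.mulVecLin_apply] using (LinearMap.mem_ker.mp hx)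
      have hconst := hker x hx0
      rw [Submodule.mem_span_singleton]
      exact ⟨x ⟨0, hn⟩, funext fun k => by
        simp only [Pi.smul_apply, smul_eq_mul, mul_one]
        exact (hconst k ⟨0, hn⟩).symm⟩
    · rw [Submodule.span_singleton_le_iff_mem, LinearMap.mem_ker]
      simpa [hfdef, Matrix.mulVecLin_apply] using hone
  have h1ne : (fun _ => (1:ℝ)) ≠ (0 : Fin n → ℝ) := by
    intro h
    have := congrFun h ⟨0, hn⟩
    norm_num at this
  have hkerdim : Module.finrank ℝ (LinearMap.ker f) = 1 := by
    rw [hker_eq]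
    exact finrank_span_singleton h1ne
  have hdim : Module.finrank ℝ (Fin n → ℝ) = n := Module.finrank_fin_fun ℝ
  have hrn := LinearMap.finrank_range_add_finrank_ker f
  rw [hdim, hkerdim] at hrn
  set g := sumLin n with hgdef
  have hcol : ∀ j, ∑ i, A i j = 0 := by
    intro j
    have h0 := congrFun hone j
    have h' : ∑ k, A j k = 0 := by
      simpa [Matrix.mulVec, dotProduct] using h0
    calc ∑ i, A i j = ∑ i, A j i := by
          refine Finset.sum_congr rfl fun i _ => ?_
          have := congrFun (congrFun hAT j) i
          simpa [Matrix.transpose_apply] using this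
      _ = 0 := h'
  have hrange_le : LinearMap.range f ≤ LinearMap.ker g := by
    rintro y ⟨x, rfl⟩
    rw [LinearMap.mem_ker]
    show ∑ i, (f x) i = 0
    calc ∑ i, (f x) i = ∑ i, ∑ j, A i j * x j := by
          simp [hfdef, Matrix.mulVecLin_apply, Matrix.mulVec, dotProduct]
      _ = ∑ j, ∑ i, A i j * x j := Finset.sum_comm
      _ = ∑ j, (∑ i, A i j) * x j := by
          refine Finset.sum_congr rfl fun j _ => ?_
          rw [Finset.sum_mul]
      _ = 0 := by simp [hcol]
  have hgtop : LinearMap.range g = ⊤ := by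
    rw [LinearMap.range_eq_top]
    intro c
    refine ⟨Pi.single ⟨0, hn⟩ c, ?_⟩
    show ∑ i, Pi.single (⟨0, hn⟩ : Fin n) c i = c
    simp
  have hrg := LinearMap.finrank_range_add_finrank_ker g
  rw [hdim] at hrg
  have hrange_g : Module.finrank ℝ (LinearMap.range g) = 1 := by
    rw [hgtop]
    simp
  rw [hrange_g] at hrg
  have heq : LinearMap.range f = LinearMap.ker g :=
    Submodule.eq_of_le_of_finrank_le hrange_le (by omega)
  have hvmem : v ∈ LinearMap.ker g := by
    rw [LinearMap.mem_ker]
    exact hv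
  rw [← heq] at hvmem
  obtain ⟨u, hu⟩ := hvmem
  exact ⟨u, by simpa [hfdef, Matrix.mulVecLin_apply] using hu⟩

section CS
variable {n : ℕ} {B : Matrix (Fin n) (Fin n) ℝ} (hBT : Bᵀ = B)
    (hq : ∀ x : Fin n → ℝ, 0 ≤ x ⬝ᵥ B *ᵥ x)

include hBT in
lemma quad_bil_symm (x y : Fin n → ℝ) : y ⬝ᵥ B *ᵥ x = x ⬝ᵥ B *ᵥ y := by
  rw [Matrix.dotProduct_mulVec, ← Matrix.mulVec_transpose, hBT, dotProduct_comm]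

include hBT hq in
lemma quad_cs (x y : Fin n → ℝ) :
    x ⬝ᵥ B *ᵥ y ≤ Real.sqrt (x ⬝ᵥ B *ᵥ x) * Real.sqrt (y ⬝ᵥ B *ᵥ y) := by
  have hexp : ∀ t : ℝ, (x + t • y) ⬝ᵥ B *ᵥ (x + t • y)
      = (y ⬝ᵥ B *ᵥ y) * (t * t) + (2 * (x ⬝ᵥ B *ᵥ y)) * t + x ⬝ᵥ B *ᵥ x := by
    intro t
    simp only [Matrix.mulVec_add, Matrix.mulVec_smul, dotProduct_add,
      add_dotProduct, dotProduct_smul, smul_dotProduct, smul_eq_mul]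
    rw [quad_bil_symm hBT y x]
    ring
  have hdisc := discrim_le_zero (a := y ⬝ᵥ B *ᵥ y) (b := 2 * (x ⬝ᵥ B *ᵥ y))
    (c := x ⬝ᵥ B *ᵥ x) (fun t => by rw [← hexp t]; exact hq _)
  rw [discrim] at hdisc
  have hsq : (x ⬝ᵥ B *ᵥ y)^2 ≤ (x ⬝ᵥ B *ᵥ x) * (y ⬝ᵥ B *ᵥ y) := by nlinarith
  calc x ⬝ᵥ B *ᵥ y ≤ |x ⬝ᵥ B *ᵥ y| := le_abs_self _
    _ = Real.sqrt ((x ⬝ᵥ B *ᵥ y)^2) := (Real.sqrt_sq_eq_abs _).symm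
    _ ≤ Real.sqrt ((x ⬝ᵥ B *ᵥ x) * (y ⬝ᵥ B *ᵥ y)) := Real.sqrt_le_sqrt hsq
    _ = Real.sqrt (x ⬝ᵥ B *ᵥ x) * Real.sqrt (y ⬝ᵥ B *ᵥ y) := Real.sqrt_mul (hq x) _

include hBT hq in
lemma quad_sqrt_triangle (x y : Fin n → ℝ) :
    Real.sqrt ((x + y) ⬝ᵥ B *ᵥ (x + y))
      ≤ Real.sqrt (x ⬝ᵥ B *ᵥ x) + Real.sqrt (y ⬝ᵥ B *ᵥ y) := by
  have hcs := quad_cs hBT hq x y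
  have hexp : (x + y) ⬝ᵥ B *ᵥ (x + y)
      = x ⬝ᵥ B *ᵥ x + 2 * (x ⬝ᵥ B *ᵥ y) + y ⬝ᵥ B *ᵥ y := by
    simp only [Matrix.mulVec_add, dotProduct_add, add_dotProduct]
    rw [quad_bil_symm hBT y x]
    ring
  have e1 : Real.sqrt (x ⬝ᵥ B *ᵥ x) ^ 2 = x ⬝ᵥ B *ᵥ x := Real.sq_sqrt (hq x)
  have e2 : Real.sqrt (y ⬝ᵥ B *ᵥ y) ^ 2 = y ⬝ᵥ B *ᵥ y := Real.sq_sqrt (hq y)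
  have hle : (x + y) ⬝ᵥ B *ᵥ (x + y)
      ≤ (Real.sqrt (x ⬝ᵥ B *ᵥ x) + Real.sqrt (y ⬝ᵥ B *ᵥ y))^2 := by
    rw [hexp]
    nlinarith
  calc Real.sqrt ((x + y) ⬝ᵥ B *ᵥ (x + y))
      ≤ Real.sqrt ((Real.sqrt (x ⬝ᵥ B *ᵥ x) + Real.sqrt (y ⬝ᵥ B *ᵥ y))^2) :=
        Real.sqrt_le_sqrt hle
    _ = _ := Real.sqrt_sq (by positivity)

end CS

/-- the square root of the ε-repelling cost is a metric on the
vertex set. -/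
theorem stmt10 {n : ℕ} (Γ : SignedGraph n) (hpc : Γ.PosConnected)
    (ε : ℝ) (hε0 : 0 < ε) (hε : ε < Γ.consensusIndex) :
    (∀ i j : Fin n, 0 ≤ Real.sqrt (Γ.cost ε i j)) ∧
    (∀ i j : Fin n, Real.sqrt (Γ.cost ε i j) = 0 ↔ i = j) ∧
    (∀ i j : Fin n, Real.sqrt (Γ.cost ε i j) = Real.sqrt (Γ.cost ε j i)) ∧
    (∀ i j k : Fin n,
      Real.sqrt (Γ.cost ε i j) ≤ Real.sqrt (Γ.cost ε i k) + Real.sqrt (Γ.cost ε k j)) := by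
  classical
  have hn : 0 < n := by
    have : Nonempty (Fin n) := hpc.nonempty
    exact Fin.pos_iff_nonempty.mpr this
  obtain ⟨hPSD, hkerconst⟩ := leps_key Γ hpc hε0 hε
  have hAH : (Γ.Leps ε).IsHermitian := hPSD.1
  have hAT : (Γ.Leps ε)ᵀ = Γ.Leps ε := isHermitian_transpose_eq hAH
  have hone : Γ.Leps ε *ᵥ (fun _ => (1:ℝ)) = 0 := leps_mulVec_one Γ ε
  obtain ⟨h1, h2, h3, h4⟩ := pinv_penrose hAH
  have hBT : (pinv (Γ.Leps ε))ᵀ = pinv (Γ.Leps ε) := pinv_transpose hAH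
  have hq_nonneg : ∀ x : Fin n → ℝ, 0 ≤ x ⬝ᵥ pinv (Γ.Leps ε) *ᵥ x :=
    fun x => pinv_quadform_nonneg hPSD x
  have hcost_eq : ∀ i j : Fin n, Γ.cost ε i j
      = (Pi.single i 1 - Pi.single j 1) ⬝ᵥ pinv (Γ.Leps ε) *ᵥ (Pi.single i 1 - Pi.single j 1) :=
    fun _ _ => rfl
  have hcost_pos : ∀ i j : Fin n, i ≠ j → 0 < Γ.cost ε i j := by
    intro i j hij
    set v : Fin n → ℝ := Pi.single i 1 - Pi.single j 1 with hvdef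
    have hvsum : ∑ k, v k = 0 := by
      simp [hvdef, Finset.sum_sub_distrib]
    obtain ⟨u, hu⟩ := range_eq_sum_zero hn hAT hone hkerconst v hvsum
    have hvne : v ≠ 0 := by
      intro h
      have := congrFun h i
      simp [hvdef, Pi.single_apply, hij, Ne.symm hij] at this
    have hchain : Γ.cost ε i j = u ⬝ᵥ Γ.Leps ε *ᵥ u := by
      rw [hcost_eq, ← hvdef, ← hu]
      calc (Γ.Leps ε *ᵥ u) ⬝ᵥ pinv (Γ.Leps ε) *ᵥ (Γ.Leps ε *ᵥ u)
          = (Γ.Leps ε *ᵥ u) ⬝ᵥ (pinv (Γ.Leps ε) * Γ.Leps ε) *ᵥ u := by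
            rw [Matrix.mulVec_mulVec]
        _ = ((Γ.Leps ε *ᵥ u) ᵥ* (pinv (Γ.Leps ε) * Γ.Leps ε)) ⬝ᵥ u :=
            Matrix.dotProduct_mulVec _ _ _
        _ = ((u ᵥ* (Γ.Leps ε)ᵀ) ᵥ* (pinv (Γ.Leps ε) * Γ.Leps ε)) ⬝ᵥ u := by
            rw [Matrix.vecMul_transpose]
        _ = (u ᵥ* ((Γ.Leps ε)ᵀ * (pinv (Γ.Leps ε) * Γ.Leps ε))) ⬝ᵥ u := by
            rw [Matrix.vecMul_vecMul]
        _ = (u ᵥ* Γ.Leps ε) ⬝ᵥ u := by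
            rw [hAT, ← mul_assoc, h1]
        _ = ((Γ.Leps ε)ᵀ *ᵥ u) ⬝ᵥ u := by rw [Matrix.mulVec_transpose]
        _ = (Γ.Leps ε *ᵥ u) ⬝ᵥ u := by rw [hAT]
        _ = u ⬝ᵥ Γ.Leps ε *ᵥ u := dotProduct_comm _ _
    rw [hchain]
    have hge : 0 ≤ u ⬝ᵥ Γ.Leps ε *ᵥ u := by
      have := hPSD.dotProduct_mulVec_nonneg u
      simpa using this
    rcases eq_or_lt_of_le hge with heq | hlt
    · exfalso
      have h0 : Γ.Leps ε *ᵥ u = 0 := by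
        have := (hPSD.dotProduct_mulVec_zero_iff u)
        simp only [star_trivial] at this
        exact this.mp heq.symm
      exact hvne (hu ▸ h0 ▸ rfl)
    · exact hlt
  have hsym : ∀ i j : Fin n, Γ.cost ε i j = Γ.cost ε j i := by
    intro i j
    rw [hcost_eq, hcost_eq]
    have hneg : (Pi.single j 1 : Fin n → ℝ) - Pi.single i 1
        = -((Pi.single i 1 : Fin n → ℝ) - Pi.single j 1) := by
      rw [neg_sub]
    rw [hneg]
    simp only [Matrix.mulVec_neg, dotProduct_neg, neg_dotProduct, neg_neg]
  refine ⟨fun i j => Real.sqrt_nonneg _, ?_, ?_, ?_⟩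
  · intro i j
    constructor
    · intro h
      by_contra hij
      have hpos := hcost_pos i j hij
      have := Real.sqrt_pos.mpr hpos
      linarith [this, h.le]
    · rintro rfl
      rw [hcost_eq]
      simp
  · intro i j
    rw [hsym i j]
  · intro i j k
    have hdecomp : (Pi.single i 1 : Fin n → ℝ) - Pi.single j 1
        = ((Pi.single i 1 : Fin n → ℝ) - Pi.single k 1)
          + ((Pi.single k 1 : Fin n → ℝ) - Pi.single j 1) := by
      abel
    have := quad_sqrt_triangle hBT hq_nonneg
      (Pi.single i 1 - Pi.single k 1) (Pi.single k 1 - Pi.single j 1)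
    rw [hcost_eq i j, hcost_eq i k, hcost_eq k j, hdecomp]
    exact this
end
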